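/- arXiv:math/0005232 — 5 statements merged into one kernel-verified Lean document; each statement's English description precedes it below -/
import Mathlib

section
/- Let Λ be a discrete additive subgroup (lattice) of ℂ², let p₁,…,p_m ∈ ℂ², and let Λ₀ = ⋃_{j=1}^m (Λ + p_j). Then there exists an invertible complex-linear transformation A : ℂ² → ℂ² such that the set {Im π¹(A p) : p ∈ Λ₀} is a discrete subset of ℝ; moreover A can be chosen so that whenever p, q ∈ A(Λ₀) with p ≠ q one has ‖p − q‖ ≥ 1 and either Im π¹(p) = Im π¹(q) or |Im π¹(p) − Im π¹(q)| ≥ 1. -/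
lemma int_sep (r : ℝ) : ∃ δ > 0, ∀ n : ℤ, |(n:ℝ) + r| < δ → (n:ℝ) + r = 0 := by
  rcases eq_or_ne (Int.fract r) 0 with h | h
  · refine ⟨1, one_pos, fun n hn => ?_⟩
    have hr : r = (⌊r⌋ : ℝ) := by
      have := Int.fract_add_floor r
      rw [h, zero_add] at this; exact this.symm
    rw [hr] at hn ⊢
    have h1 : |((n + ⌊r⌋ : ℤ) : ℝ)| < 1 := by push_cast; push_cast at hn; exact hn
    have h2 : (n + ⌊r⌋ : ℤ) = 0 := by
      by_contra h3
      have h4 : (1:ℝ) ≤ |((n + ⌊r⌋ : ℤ) : ℝ)| := by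
        rw [← Int.cast_abs]; exact_mod_cast Int.one_le_abs h3
      linarith
    have : ((n + ⌊r⌋ : ℤ) : ℝ) = 0 := by exact_mod_cast h2
    push_cast at this; exact this
  · have h1 : 0 < Int.fract r := lt_of_le_of_ne (Int.fract_nonneg r) (Ne.symm h)
    have h2 : Int.fract r < 1 := Int.fract_lt_one r
    refine ⟨min (Int.fract r) (1 - Int.fract r), lt_min h1 (by linarith), fun n hn => ?_⟩
    exfalso
    have hfr : (n:ℝ) + r = ((n + ⌊r⌋ : ℤ) : ℝ) + Int.fract r := by
      push_cast [Int.fract]; ring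
    set k : ℤ := n + ⌊r⌋ with hk
    rcases le_or_gt 0 k with hk0 | hk0
    · have h3 : Int.fract r ≤ (n:ℝ) + r := by
        rw [hfr]; have : (0:ℝ) ≤ (k:ℝ) := by exact_mod_cast hk0
        linarith
      have h5 : Int.fract r ≤ |(n:ℝ) + r| := le_trans h3 (le_abs_self _)
      have h6 := min_le_left (Int.fract r) (1 - Int.fract r)
      linarith
    · have hk1 : (k:ℝ) ≤ -1 := by
        have : k ≤ -1 := by omega
        exact_mod_cast this
      have h3 : (n:ℝ) + r ≤ -(1 - Int.fract r) := by rw [hfr]; linarith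
      have h4 : 1 - Int.fract r ≤ |(n:ℝ) + r| := le_trans (by linarith) (neg_le_abs _)
      have h6 := min_le_right (Int.fract r) (1 - Int.fract r)
      linarith

-- small ball around 0 in a discrete subgroup
lemma disc_eps (Λ : AddSubgroup (ℂ × ℂ)) (hΛ : DiscreteTopology Λ) :
    ∃ ε > 0, ∀ y ∈ Λ, ‖y‖ < ε → y = 0 := by
  have h0 : IsOpen ({0} : Set Λ) := isOpen_discrete _
  rw [Metric.isOpen_iff] at h0
  obtain ⟨ε, hε, hball⟩ := h0 0 rfl
  refine ⟨ε, hε, fun y hy hn => ?_⟩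
  have : (⟨y, hy⟩ : Λ) ∈ Metric.ball (0 : Λ) ε := by
    rw [Metric.mem_ball, Subtype.dist_eq]
    simpa [dist_eq_norm] using hn
  have := hball this
  simpa [Subtype.ext_iff] using this

lemma lat_sep (Λ : AddSubgroup (ℂ × ℂ)) (hΛ : DiscreteTopology Λ) (c : ℂ × ℂ) :
    ∃ ε > 0, ∀ y ∈ Λ, ‖y + c‖ < ε → y + c = 0 := by
  obtain ⟨ε₀, hε₀, h0⟩ := disc_eps Λ hΛ
  by_cases hc : -c ∈ Λ
  · refine ⟨ε₀, hε₀, fun y hy hn => ?_⟩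
    have hmem : y - (-c) ∈ Λ := sub_mem hy hc
    have : y - (-c) = 0 := h0 _ hmem (by simpa [sub_neg_eq_add] using hn)
    simpa [sub_neg_eq_add] using this
  · have hcl : IsClosed ((Λ : Set (ℂ × ℂ))) := AddSubgroup.isClosed_of_discrete
    have : IsOpen ((Λ : Set (ℂ × ℂ))ᶜ) := hcl.isOpen_compl
    rw [Metric.isOpen_iff] at this
    obtain ⟨ε, hε, hball⟩ := this (-c) hc
    refine ⟨ε, hε, fun y hy hn => ?_⟩
    exfalso
    have : y ∈ Metric.ball (-c) ε := by
      rw [Metric.mem_ball, dist_eq_norm]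
      simpa [sub_neg_eq_add] using hn
    exact hball this hy

lemma fin_min {ι : Type*} [Fintype ι] (g : ι → ℝ) (hg : ∀ i, 0 < g i) :
    ∃ ε > 0, ∀ i, ε ≤ g i := by
  cases isEmpty_or_nonempty ι
  · exact ⟨1, one_pos, fun i => (IsEmpty.false i).elim⟩
  · refine ⟨Finset.univ.inf' Finset.univ_nonempty g, ?_, fun i => ?_⟩
    · rw [gt_iff_lt, Finset.lt_inf'_iff]; exact fun i _ => hg i
    · exact Finset.inf'_le _ (Finset.mem_univ i)

lemma sep_discrete (S : Set ℝ) (h : ∀ a ∈ S, ∀ b ∈ S, a ≠ b → 1 ≤ |a - b|) :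
    DiscreteTopology S := by
  rw [discreteTopology_iff_isOpen_singleton]
  intro ⟨x, hx⟩
  have : {(⟨x, hx⟩ : S)} = (Subtype.val) ⁻¹' (Metric.ball x 1) := by
    ext ⟨y, hy⟩
    simp only [Set.mem_singleton_iff, Set.mem_preimage, Metric.mem_ball, Subtype.mk.injEq]
    constructor
    · rintro rfl; simp
    · intro hd
      by_contra hne
      have := h y hy x hx hne
      rw [Real.dist_eq] at hd; linarith
  rw [this]
  exact (Metric.isOpen_ball).preimage continuous_subtype_val

lemma smul_decomp (c : ℂ) (z : ℂ × ℂ) :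
    c • z = (c.re : ℝ) • z + (c.im : ℝ) • (Complex.I • z) := by
  apply Prod.ext <;>
  · simp only [Prod.smul_fst, Prod.smul_snd, Prod.fst_add, Prod.snd_add, smul_eq_mul,
      Complex.real_smul]
    rw [Complex.ext_iff]
    constructor <;> simp <;> ring

noncomputable def mkF (ℓ : (ℂ × ℂ) →ₗ[ℝ] ℝ) : (ℂ × ℂ) →ₗ[ℂ] ℂ where
  toFun z := (ℓ (Complex.I • z) : ℂ) + (ℓ z : ℂ) * Complex.I
  map_add' x y := by simp [smul_add]; push_cast; ring
  map_smul' c z := by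
    simp only [RingHom.id_apply]
    have h1 : Complex.I • (c • z) = (c.re : ℝ) • (Complex.I • z) + (c.im : ℝ) • ((-1 : ℝ) • z) := by
      apply Prod.ext <;>
      · simp only [Prod.smul_fst, Prod.smul_snd, Prod.fst_add, Prod.snd_add, smul_eq_mul,
          Complex.real_smul]
        rw [Complex.ext_iff]
        constructor <;> simp <;> ring
    have h2 : c • z = (c.re : ℝ) • z + (c.im : ℝ) • (Complex.I • z) := smul_decomp c z
    rw [h1, h2]
    simp only [map_add, map_smul, smul_eq_mul]
    push_cast
    rw [Complex.ext_iff]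
    constructor <;> simp <;> ring

lemma mkF_apply (ℓ : (ℂ × ℂ) →ₗ[ℝ] ℝ) (z : ℂ × ℂ) :
    mkF ℓ z = (ℓ (Complex.I • z) : ℂ) + (ℓ z : ℂ) * Complex.I := rfl

lemma mkF_im (ℓ : (ℂ × ℂ) →ₗ[ℝ] ℝ) (z : ℂ × ℂ) : (mkF ℓ z).im = ℓ z := by
  simp [mkF_apply]

lemma exists_autom (f : (ℂ × ℂ) →ₗ[ℂ] ℂ) (hf : f ≠ 0) :
    ∃ E : (ℂ × ℂ) ≃ₗ[ℂ] ℂ × ℂ, ∀ z, (E z).1 = f z := by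
  set a := f (1, 0) with ha
  set b := f (0, 1) with hb
  have hfz : ∀ z : ℂ × ℂ, f z = z.1 * a + z.2 * b := by
    intro z
    have hz : z = z.1 • ((1:ℂ), (0:ℂ)) + z.2 • ((0:ℂ), (1:ℂ)) := by
      apply Prod.ext <;> simp
    conv_lhs => rw [hz]
    rw [map_add, map_smul, map_smul, smul_eq_mul, smul_eq_mul]
  have hab : a ≠ 0 ∨ b ≠ 0 := by
    by_contra h
    push_neg at h
    apply hf
    apply LinearMap.ext; intro z
    rw [hfz z, h.1, h.2]; simp
  rcases hab with haa | hbb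
  · refine ⟨LinearEquiv.ofLinear
      (LinearMap.prod f (LinearMap.snd ℂ ℂ ℂ))
      (LinearMap.prod (a⁻¹ • (LinearMap.fst ℂ ℂ ℂ - b • LinearMap.snd ℂ ℂ ℂ)) (LinearMap.snd ℂ ℂ ℂ))
      ?_ ?_, fun z => rfl⟩
    · apply LinearMap.ext; intro z
      apply Prod.ext <;> simp [hfz] <;> field_simp <;> ring
    · apply LinearMap.ext; intro z
      apply Prod.ext <;> simp [hfz] <;> field_simp <;> ring
  · refine ⟨LinearEquiv.ofLinear
      (LinearMap.prod f (LinearMap.fst ℂ ℂ ℂ))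
      (LinearMap.prod (LinearMap.snd ℂ ℂ ℂ) (b⁻¹ • (LinearMap.fst ℂ ℂ ℂ - a • LinearMap.snd ℂ ℂ ℂ)))
      ?_ ?_, fun z => rfl⟩
    · apply LinearMap.ext; intro z
      apply Prod.ext <;> simp [hfz] <;> field_simp <;> ring
    · apply LinearMap.ext; intro z
      apply Prod.ext <;> simp [hfz] <;> field_simp <;> ring

open Submodule Module

lemma exists_int_functional (Λ : AddSubgroup (ℂ × ℂ)) (hΛ : DiscreteTopology Λ) :
    ∃ ℓ : (ℂ × ℂ) →ₗ[ℝ] ℝ, ℓ ≠ 0 ∧ ∀ x ∈ Λ, ∃ n : ℤ, ℓ x = (n : ℝ) := by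
  classical
  set L : Submodule ℤ (ℂ × ℂ) := AddSubgroup.toIntSubmodule Λ with hL
  have hLd : DiscreteTopology L := hΛ
  set F : Submodule ℝ (ℂ × ℂ) := span ℝ (L : Set (ℂ × ℂ)) with hF
  set L₀ : Submodule ℤ F := L.comap ((F.subtype).restrictScalars ℤ) with hL₀
  have h_img : F.subtype '' L₀ = L := by
    rw [← LinearMap.coe_restrictScalars ℤ F.subtype, ← Submodule.map_coe ((F.subtype).restrictScalars ℤ),
      Submodule.map_comap_eq_self]
    exact fun x hx ↦ LinearMap.mem_range.mpr ⟨⟨x, Submodule.subset_span hx⟩, rfl⟩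
  have hL₀d : DiscreteTopology L₀ := by
    refine DiscreteTopology.preimage_of_continuous_injective (L : Set (ℂ × ℂ)) ?_ (injective_subtype _)
    exact LinearMap.continuous_of_finiteDimensional F.subtype
  have hL₀z : IsZLattice ℝ L₀ := ⟨by
    rw [← (Submodule.map_injective_of_injective (injective_subtype F)).eq_iff, Submodule.map_span,
      Submodule.map_top, range_subtype, h_img]⟩
  have : Module.Free ℤ L₀ := inferInstance
  have : Module.Finite ℤ L₀ := inferInstance
  set ι := Module.Free.ChooseBasisIndex ℤ L₀ with hι
  set b₀ : Basis ι ℤ L₀ := Module.Free.chooseBasis ℤ L₀ with hb₀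
  cases isEmpty_or_nonempty ι with
  | inl h =>
    -- L₀ trivial, so Λ trivial
    have hLbot : ∀ x ∈ Λ, x = (0 : ℂ × ℂ) := by
      intro x hx
      have hxF : x ∈ F := Submodule.subset_span hx
      have hx0 : (⟨x, hxF⟩ : F) ∈ L₀ := by
        simp only [hL₀, Submodule.mem_comap]
        exact hx
      have : Subsingleton L₀ := b₀.repr.toEquiv.subsingleton
      have h0 := Subsingleton.elim (⟨⟨x, hxF⟩, hx0⟩ : L₀) 0
      have : (⟨x, hxF⟩ : F) = 0 := congrArg Subtype.val h0
      exact congrArg Subtype.val this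
    refine ⟨Complex.reLm.comp (LinearMap.fst ℝ ℂ ℂ), ?_, fun x hx => ⟨0, by rw [hLbot x hx]; simp⟩⟩
    intro h0
    have := congrFun (congrArg DFunLike.coe h0) ((1 : ℂ), (0 : ℂ))
    simpa using this
  | inr h =>
    obtain ⟨i₀⟩ := h
    set b : Basis ι ℝ F := b₀.ofZLatticeBasis ℝ L₀ with hb
    obtain ⟨g, hg⟩ := LinearMap.exists_extend (b.coord i₀)
    refine ⟨g, ?_, ?_⟩
    · intro h0
      have h1 : g (b i₀ : ℂ × ℂ) = b.coord i₀ (b i₀) := by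
        have := congrFun (congrArg DFunLike.coe hg) (b i₀)
        simpa using this
      rw [h0] at h1
      simp [Basis.coord_apply] at h1
    · intro x hx
      have hxF : x ∈ F := Submodule.subset_span hx
      have hx0 : (⟨x, hxF⟩ : F) ∈ L₀ := by
        simp only [hL₀, Submodule.mem_comap]
        exact hx
      refine ⟨b₀.repr ⟨⟨x, hxF⟩, hx0⟩ i₀, ?_⟩
      have h1 : g x = b.coord i₀ ⟨x, hxF⟩ := by
        have := congrFun (congrArg DFunLike.coe hg) ⟨x, hxF⟩
        simpa using this
      rw [h1, Basis.coord_apply]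
      exact_mod_cast b₀.ofZLatticeBasis_repr_apply ℝ L₀ ⟨⟨x, hxF⟩, hx0⟩ i₀

/-- Let `Λ` be a discrete additive subgroup (lattice) of `ℂ²`, let
`p 1, …, p m ∈ ℂ²`, and let `Λ₀ = ⋃ j, (Λ + p j)`.  Then there exists an invertible
complex-linear transformation `A : ℂ² → ℂ²` such that `{Im π¹(A p) : p ∈ Λ₀}` is a
discrete subset of `ℝ`; moreover `A` can be chosen so that whenever `p, q ∈ A(Λ₀)`
with `p ≠ q` one has `‖p − q‖ ≥ 1` and either `Im π¹(p) = Im π¹(q)` or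
`|Im π¹(p) − Im π¹(q)| ≥ 1`. -/
theorem exists_linear_map_discrete_imaginary_parts
    (Λ : AddSubgroup (ℂ × ℂ)) (hΛ : DiscreteTopology Λ)
    (m : ℕ) (p : Fin m → ℂ × ℂ)
    (Λ₀ : Set (ℂ × ℂ))
    (hΛ₀ : Λ₀ = ⋃ j : Fin m, (fun q => q + p j) '' (Λ : Set (ℂ × ℂ))) :
    ∃ A : (ℂ × ℂ) ≃L[ℂ] ℂ × ℂ,
      DiscreteTopology ((fun q : ℂ × ℂ => (A q).1.im) '' Λ₀) ∧
      ∀ x ∈ (A : (ℂ × ℂ) → ℂ × ℂ) '' Λ₀, ∀ y ∈ (A : (ℂ × ℂ) → ℂ × ℂ) '' Λ₀,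
        x ≠ y →
          1 ≤ ‖x - y‖ ∧ (x.1.im = y.1.im ∨ 1 ≤ |x.1.im - y.1.im|) := by
  classical
  obtain ⟨ℓ, hℓ0, hℓℤ⟩ := exists_int_functional Λ hΛ
  set f : (ℂ × ℂ) →ₗ[ℂ] ℂ := mkF ℓ with hfdef
  have hf0 : f ≠ 0 := by
    intro h
    apply hℓ0
    apply LinearMap.ext; intro z
    have h1 := mkF_im ℓ z
    rw [← hfdef, h] at h1
    simpa using h1.symm
  obtain ⟨E, hE⟩ := exists_autom f hf0
  -- decomposition of membership in Λ₀
  have hmem : ∀ u ∈ Λ₀, ∃ j : Fin m, ∃ y ∈ Λ, u = y + p j := by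
    intro u hu
    rw [hΛ₀, Set.mem_iUnion] at hu
    obtain ⟨j, y, hy, hyu⟩ := hu
    exact ⟨j, y, hy, hyu.symm⟩
  -- ε : norm separation of differences
  have hεex : ∀ ij : Fin m × Fin m, ∃ ε > 0, ∀ y ∈ Λ,
      ‖y + (p ij.1 - p ij.2)‖ < ε → y + (p ij.1 - p ij.2) = 0 :=
    fun ij => lat_sep Λ hΛ _
  choose e he hes using hεex
  obtain ⟨ε, hε, hεle⟩ := fin_min e he
  -- δ : separation of ℓ-values of differences
  have hδex : ∀ ij : Fin m × Fin m, ∃ δ > 0, ∀ n : ℤ,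
      |(n : ℝ) + ℓ (p ij.1 - p ij.2)| < δ → (n : ℝ) + ℓ (p ij.1 - p ij.2) = 0 :=
    fun ij => int_sep _
  choose dd hdd hdds using hδex
  obtain ⟨δ, hδ, hδle⟩ := fin_min dd hdd
  -- difference facts
  have hdiff : ∀ u ∈ Λ₀, ∀ v ∈ Λ₀,
      (u - v ≠ 0 → ε ≤ ‖u - v‖) ∧ (ℓ (u - v) ≠ 0 → δ ≤ |ℓ (u - v)|) := by
    intro u hu v hv
    obtain ⟨i, y, hy, rfl⟩ := hmem u hu
    obtain ⟨j, z, hz, rfl⟩ := hmem v hv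
    have hd : (y + p i) - (z + p j) = (y - z) + (p i - p j) := by ring
    have hyz : y - z ∈ Λ := sub_mem hy hz
    constructor
    · intro hne
      by_contra hlt
      push_neg at hlt
      have h1 : ‖(y - z) + (p i - p j)‖ < e (i, j) :=
        lt_of_lt_of_le (by rw [← hd]; exact hlt) (hεle (i, j))
      exact hne (by rw [hd]; exact hes (i, j) _ hyz h1)
    · intro hne
      by_contra hlt
      push_neg at hlt
      obtain ⟨n, hn⟩ := hℓℤ _ hyz
      have hval : ℓ ((y + p i) - (z + p j)) = (n : ℝ) + ℓ (p i - p j) := by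
        rw [hd, map_add, hn]
      have h1 : |(n : ℝ) + ℓ (p i - p j)| < dd (i, j) :=
        lt_of_lt_of_le (by rw [← hval]; exact hlt) (hδle (i, j))
      exact hne (by rw [hval]; exact hdds (i, j) n h1)
  -- continuous version of E and its inverse bound
  set Ec : (ℂ × ℂ) ≃L[ℂ] ℂ × ℂ := E.toContinuousLinearEquiv with hEc
  have hEc1 : ∀ z, (Ec z).1 = f z := fun z => hE z
  set C : ℝ := ‖(Ec.symm : (ℂ × ℂ) →L[ℂ] ℂ × ℂ)‖ + 1 with hCdef
  have hCpos : 0 < C := by positivity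
  have hC : ∀ w : ℂ × ℂ, ‖w‖ ≤ C * ‖Ec w‖ := by
    intro w
    have h1 : ‖Ec.symm (Ec w)‖ ≤ ‖(Ec.symm : (ℂ × ℂ) →L[ℂ] ℂ × ℂ)‖ * ‖Ec w‖ :=
      (Ec.symm : (ℂ × ℂ) →L[ℂ] ℂ × ℂ).le_opNorm _
    have h2 : Ec.symm (Ec w) = w := Ec.symm_apply_apply w
    rw [h2] at h1
    rw [hCdef]
    nlinarith [norm_nonneg (Ec w)]
  -- the scale factor
  set c₀ : ℝ := max 1 (max (C / ε) (1 / δ)) with hc₀def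
  have hc₀pos : (0:ℝ) < c₀ := lt_of_lt_of_le one_pos (le_max_left _ _)
  have hc₀ne : ((c₀ : ℝ) : ℂ) ≠ 0 := by exact_mod_cast ne_of_gt hc₀pos
  set A : (ℂ × ℂ) ≃L[ℂ] ℂ × ℂ :=
    Ec.trans (LinearEquiv.smulOfNeZero ℂ (ℂ × ℂ) ((c₀ : ℝ) : ℂ) hc₀ne).toContinuousLinearEquiv
    with hAdef
  have hA : ∀ z, A z = ((c₀ : ℝ) : ℂ) • (Ec z) := fun z => rfl
  have hAim : ∀ z, (A z).1.im = c₀ * ℓ z := by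
    intro z
    rw [hA]
    have : (((c₀ : ℝ) : ℂ) • (Ec z)).1 = ((c₀ : ℝ) : ℂ) * (Ec z).1 := rfl
    rw [this, hEc1]
    have := mkF_im ℓ z
    rw [← hfdef] at this
    rw [Complex.mul_im]
    simp [this]
  refine ⟨A, ?_, ?_⟩
  · -- discreteness via 1-separation of values
    apply sep_discrete
    rintro s ⟨u, hu, rfl⟩ t ⟨v, hv, rfl⟩ hst
    simp only [hAim] at hst ⊢
    have hℓne : ℓ u ≠ ℓ v := fun h => hst (by rw [h])
    have hd : ℓ (u - v) ≠ 0 := by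
      rw [map_sub]; exact sub_ne_zero.mpr hℓne
    have h1 : δ ≤ |ℓ (u - v)| := (hdiff u hu v hv).2 hd
    have h2 : c₀ * ℓ u - c₀ * ℓ v = c₀ * ℓ (u - v) := by rw [map_sub]; ring
    rw [h2, abs_mul, abs_of_pos hc₀pos]
    have h3 : (1/δ) * δ ≤ c₀ * |ℓ (u - v)| := by
      apply mul_le_mul (le_trans (le_max_right _ _) (le_max_right _ _)) h1 (le_of_lt hδ)
        (le_of_lt hc₀pos)
    rw [one_div_mul_cancel (ne_of_gt hδ)] at h3
    exact h3
  · rintro x ⟨u, hu, rfl⟩ y ⟨v, hv, rfl⟩ hxy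
    have huv : u ≠ v := fun h => hxy (by rw [h])
    have hd0 : u - v ≠ 0 := sub_ne_zero.mpr huv
    constructor
    · have h1 : ε ≤ ‖u - v‖ := (hdiff u hu v hv).1 hd0
      have h2 : A u - A v = ((c₀ : ℝ) : ℂ) • (Ec (u - v)) := by
        rw [hA, hA, ← smul_sub, ← map_sub]
      rw [h2, norm_smul]
      have h3 : ‖((c₀ : ℝ) : ℂ)‖ = c₀ := by
        rw [Complex.norm_real, Real.norm_eq_abs, abs_of_pos hc₀pos]
      rw [h3]
      have h4 : ε ≤ C * ‖Ec (u - v)‖ := le_trans h1 (hC _)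
      have h5 : ε / C ≤ ‖Ec (u - v)‖ := (div_le_iff₀' hCpos).mpr h4
      have h6 : (C / ε) * (ε / C) ≤ c₀ * ‖Ec (u - v)‖ :=
        mul_le_mul (le_trans (le_max_left _ _) (le_max_right _ _)) h5 (by positivity)
          (le_of_lt hc₀pos)
      have h7 : (C / ε) * (ε / C) = 1 := by field_simp
      rw [h7] at h6
      exact h6
    · rcases eq_or_ne (ℓ u) (ℓ v) with hℓeq | hℓne
      · left
        rw [hAim, hAim, hℓeq]
      · right
        have hd : ℓ (u - v) ≠ 0 := by rw [map_sub]; exact sub_ne_zero.mpr hℓne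
        have h1 : δ ≤ |ℓ (u - v)| := (hdiff u hu v hv).2 hd
        rw [hAim, hAim]
        have h2 : c₀ * ℓ u - c₀ * ℓ v = c₀ * ℓ (u - v) := by rw [map_sub]; ring
        rw [h2, abs_mul, abs_of_pos hc₀pos]
        have h3 : (1/δ) * δ ≤ c₀ * |ℓ (u - v)| :=
          mul_le_mul (le_trans (le_max_right _ _) (le_max_right _ _)) h1 (le_of_lt hδ)
            (le_of_lt hc₀pos)
        rw [one_div_mul_cancel (ne_of_gt hδ)] at h3
        exact h3
end

section
/- Let C > 0, let f : ℝ → [0, C] be measurable, and let ε ∈ (0,1). Then there exists a function g holomorphic on the strip S_ε with Re g(z) ≥ 0 for all z ∈ S_ε, such that for every δ > 0 and every z₀ = x₀ + i y₀ ∈ S_ε with the property that f(x) = f(x₀) for all x ∈ (x₀ − δ, x₀ + δ), one has |g(z₀) − f(x₀)| ≤ 2Cε/(πδ). -/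
open MeasureTheory Real Set Complex Filter Topology

noncomputable def stripK (ε : ℝ) (w : ℂ) : ℂ := ((ε / Real.pi : ℝ) : ℂ) * ((ε:ℂ)^2 + w^2)⁻¹

lemma stripK_den_re (ε : ℝ) (w : ℂ) :
    (((ε:ℂ)^2 + w^2)).re = w.re^2 + (ε^2 - w.im^2) := by
  simp [pow_two, Complex.mul_re]
  ring

lemma stripK_den_abs_ge {ε : ℝ} (w : ℂ) :
    w.re^2 + (ε^2 - w.im^2) ≤ ‖(ε:ℂ)^2 + w^2‖ := by
  rw [← stripK_den_re]
  exact Complex.re_le_norm _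

lemma stripK_den_ne {ε : ℝ} {w : ℂ} (h : w.im^2 < ε^2) : ((ε:ℂ)^2 + w^2) ≠ 0 := by
  intro h0
  have := stripK_den_abs_ge (ε := ε) w
  rw [h0] at this
  simp at this
  nlinarith [sq_nonneg w.re]

lemma stripK_norm {ε : ℝ} (hε : 0 < ε) (w : ℂ) :
    ‖stripK ε w‖ = (ε / Real.pi) * (‖(ε:ℂ)^2 + w^2‖)⁻¹ := by
  have : (0:ℝ) ≤ ε / Real.pi := div_nonneg hε.le Real.pi_pos.le
  rw [stripK]
  rw [norm_mul, norm_inv, Complex.norm_real, Real.norm_eq_abs, _root_.abs_of_nonneg this]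

lemma stripK_norm_le {ε : ℝ} (hε : 0 < ε) {w : ℂ} (h : w.im^2 < ε^2) :
    ‖stripK ε w‖ ≤ (ε / Real.pi) * (w.re^2 + (ε^2 - w.im^2))⁻¹ := by
  rw [stripK_norm hε]
  have h1 : 0 < w.re^2 + (ε^2 - w.im^2) := by nlinarith [sq_nonneg w.re]
  have h2 := stripK_den_abs_ge (ε := ε) w
  have h3 : (0:ℝ) < ‖(ε:ℂ)^2 + w^2‖ := lt_of_lt_of_le h1 h2
  gcongr <;> first
    | exact div_nonneg hε.le Real.pi_pos.le
    | exact h2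
    | exact h1
    | skip

lemma stripK_re_nonneg {ε : ℝ} (hε : 0 < ε) {w : ℂ} (h : w.im^2 < ε^2) :
    0 ≤ (stripK ε w).re := by
  rw [stripK, Complex.mul_re]
  have h1 : 0 < w.re^2 + (ε^2 - w.im^2) := by nlinarith [sq_nonneg w.re]
  have h2 : 0 ≤ (((ε:ℂ)^2 + w^2)⁻¹).re := by
    rw [Complex.inv_re, stripK_den_re]
    exact div_nonneg h1.le (Complex.normSq_nonneg _)
  simp only [Complex.ofReal_re, Complex.ofReal_im, zero_mul, sub_zero]
  exact mul_nonneg (div_nonneg hε.le Real.pi_pos.le) h2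

lemma integrable_inv_sq_add {c : ℝ} (hc : 0 < c) (x : ℝ) :
    Integrable (fun t : ℝ => ((t - x)^2 + c)⁻¹) := by
  have hs : Real.sqrt c ≠ 0 := by positivity
  have h2 : Integrable (fun t : ℝ => (1 + (t / Real.sqrt c)^2)⁻¹) :=
    integrable_inv_one_add_sq.comp_div hs
  have h3 := (h2.comp_sub_right x).const_mul c⁻¹
  refine h3.congr (Filter.Eventually.of_forall fun t => ?_)
  have hsq : Real.sqrt c ^ 2 = c := Real.sq_sqrt hc.le
  field_simp
  linear_combination (t - x)^2 * hsq

lemma stripK_cont {ε : ℝ} {z : ℂ} (hz : z.im^2 < ε^2) :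
    Continuous fun t : ℝ => stripK ε (z - (t:ℂ)) := by
  have hden : ∀ t : ℝ, ((ε:ℂ)^2 + (z - (t:ℂ))^2) ≠ 0 := by
    intro t
    apply stripK_den_ne
    simpa using hz
  unfold stripK
  fun_prop (disch := intros; apply hden)

lemma integrable_mul_stripK {ε : ℝ} (hε : 0 < ε) {z : ℂ} (hz : z.im^2 < ε^2)
    {φ : ℝ → ℝ} (hφ : Measurable φ) {M : ℝ} (hM : ∀ t, |φ t| ≤ M) :
    Integrable (fun t : ℝ => (φ t : ℂ) * stripK ε (z - (t:ℂ))) := by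
  have hc : 0 < ε^2 - z.im^2 := by linarith
  have hb : Integrable (fun t : ℝ => M * ((ε / Real.pi) * ((t - z.re)^2 + (ε^2 - z.im^2))⁻¹)) :=
    ((integrable_inv_sq_add hc z.re).const_mul _).const_mul M
  refine Integrable.mono' hb ?_ (Filter.Eventually.of_forall fun t => ?_)
  · exact ((Complex.measurable_ofReal.comp hφ).aestronglyMeasurable.mul
      (stripK_cont hz).aestronglyMeasurable)
  · have h1 : ‖(φ t : ℂ)‖ ≤ M := by
      rw [Complex.norm_real]; exact hM t
    have h2 : ‖stripK ε (z - (t:ℂ))‖ ≤ (ε / Real.pi) * ((t - z.re)^2 + (ε^2 - z.im^2))⁻¹ := by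
      have := stripK_norm_le hε (w := z - (t:ℂ)) (by simpa using hz)
      have he : (z - (t:ℂ)).re^2 = (t - z.re)^2 := by simp [Complex.sub_re]; ring
      have hi : (z - (t:ℂ)).im = z.im := by simp
      rw [he, hi] at this
      exact this
    calc ‖(φ t : ℂ) * stripK ε (z - (t:ℂ))‖ = ‖(φ t : ℂ)‖ * ‖stripK ε (z - (t:ℂ))‖ := norm_mul _ _
      _ ≤ M * ((ε / Real.pi) * ((t - z.re)^2 + (ε^2 - z.im^2))⁻¹) := by
          apply mul_le_mul h1 h2 (norm_nonneg _) ((abs_nonneg (φ 0)).trans (hM 0))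

noncomputable def stripK' (ε : ℝ) (z : ℂ) (t : ℝ) : ℂ :=
  ((ε / Real.pi : ℝ) : ℂ) * (-(2*(z - (t:ℂ))) / ((ε:ℂ)^2 + (z - (t:ℂ))^2)^2)

lemma hasDerivAt_stripK {ε : ℝ} {z : ℂ} (hz : z.im^2 < ε^2) (t : ℝ) :
    HasDerivAt (fun z => stripK ε (z - (t:ℂ))) (stripK' ε z t) z := by
  have hden : ((ε:ℂ)^2 + (z - (t:ℂ))^2) ≠ 0 := stripK_den_ne (by simpa using hz)
  have h1 : HasDerivAt (fun z : ℂ => (ε:ℂ)^2 + (z - (t:ℂ))^2) (2*(z - (t:ℂ))) z := by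
    have := (((hasDerivAt_id z).sub_const ((t:ℂ))).pow 2).const_add ((ε:ℂ)^2)
    simpa using this
  have h2 := (h1.inv hden).const_mul ((ε / Real.pi : ℝ) : ℂ)
  simpa [stripK, stripK', neg_div, mul_comm] using h2

lemma stripK'_norm {ε : ℝ} (hε : 0 < ε) (z : ℂ) (t : ℝ) :
    ‖stripK' ε z t‖ = (ε / Real.pi) * ((2 * ‖z - (t:ℂ)‖) *
      ((‖(ε:ℂ)^2 + (z - (t:ℂ))^2‖)^2)⁻¹) := by
  have h0 : (0:ℝ) ≤ ε / Real.pi := div_nonneg hε.le Real.pi_pos.le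
  rw [stripK', norm_mul, norm_div, Complex.norm_real, Real.norm_eq_abs,
    _root_.abs_of_nonneg h0, norm_neg, norm_mul, norm_pow]
  simp [div_eq_mul_inv]

set_option maxHeartbeats 1000000 in
lemma diffAt_integral_stripK {ε : ℝ} (hε : ε ∈ Set.Ioo (0:ℝ) 1)
    {φ : ℝ → ℝ} (hφ : Measurable φ) {M : ℝ} (hM : ∀ t, |φ t| ≤ M)
    {z₀ : ℂ} (hz₀ : -ε < z₀.im ∧ z₀.im < ε) :
    DifferentiableAt ℂ (fun z => ∫ t : ℝ, (φ t : ℂ) * stripK ε (z - (t:ℂ))) z₀ := by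
  obtain ⟨hε0, hε1⟩ := hε
  have hM0 : 0 ≤ M := (abs_nonneg (φ 0)).trans (hM 0)
  set y₀ := z₀.im with hy₀
  have hy : |y₀| < ε := abs_lt.mpr ⟨by linarith [hz₀.1], hz₀.2⟩
  set m : ℝ := (|y₀| + ε)/2 with hm
  have hmε : m < ε := by rw [hm]; linarith
  have hym : |y₀| < m := by rw [hm]; linarith
  have hm0 : 0 ≤ m := by positivity
  set c' : ℝ := ε^2 - m^2 with hc'def
  have hc' : 0 < c' := by rw [hc'def]; nlinarith
  set r : ℝ := min (Real.sqrt (c'/2)) ((ε - |y₀|)/2) with hrdef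
  have hr : 0 < r := lt_min (Real.sqrt_pos.mpr (by linarith)) (by linarith)
  have hr2 : r^2 ≤ c'/2 := by
    have : r ≤ Real.sqrt (c'/2) := min_le_left _ _
    nlinarith [Real.sq_sqrt (by linarith : (0:ℝ) ≤ c'/2), Real.sqrt_nonneg (c'/2), hr.le]
  have hr1 : r ≤ (ε - |y₀|)/2 := min_le_right _ _
  have hrε : r ≤ 1 := by
    calc r ≤ (ε - |y₀|)/2 := hr1
      _ ≤ 1 := by have := abs_nonneg y₀; linarith
  -- facts about z in the ball
  have hball : ∀ z ∈ Metric.ball z₀ r, |z.im| ≤ m ∧ |z.re - z₀.re| ≤ r := by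
    intro z hz
    have hd : ‖z - z₀‖ < r := by
      simpa [Complex.dist_eq] using hz
    constructor
    · have h1 : |z.im - y₀| ≤ ‖z - z₀‖ := by
        simpa using Complex.abs_im_le_norm (z - z₀)
      have := abs_sub_abs_le_abs_sub z.im y₀
      have h2 : |z.im| ≤ |y₀| + |z.im - y₀| := by
        have := abs_sub y₀ z.im
        calc |z.im| = |y₀ + (z.im - y₀)| := by ring_nf
          _ ≤ |y₀| + |z.im - y₀| := abs_add_le _ _
      rw [hm]; linarith
    · have h1 : |z.re - z₀.re| ≤ ‖z - z₀‖ := by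
        simpa using Complex.abs_re_le_norm (z - z₀)
      linarith
  have him2 : ∀ z ∈ Metric.ball z₀ r, z.im^2 < ε^2 := by
    intro z hz
    have h := (hball z hz).1
    nlinarith [abs_nonneg z.im, neg_abs_le z.im, le_abs_self z.im]
  set A : ℝ := 8*M*(ε/Real.pi)*((c'+3)/c') with hAdef
  set bound : ℝ → ℝ := fun t => A * ((t - z₀.re)^2 + c')⁻¹ with hbounddef
  have key := hasDerivAt_integral_of_dominated_loc_of_deriv_le (μ := volume)
      (F := fun (z : ℂ) (t : ℝ) => (φ t : ℂ) * stripK ε (z - (t:ℂ)))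
      (F' := fun (z : ℂ) (t : ℝ) => (φ t : ℂ) * stripK' ε z t)
      (x₀ := z₀) (bound := bound) (Metric.ball_mem_nhds z₀ hr) ?_ ?_ ?_ ?_ ?_ ?_
  · exact key.2.differentiableAt
  · -- eventual measurability
    filter_upwards [Metric.ball_mem_nhds z₀ hr] with z hz
    exact ((Complex.measurable_ofReal.comp hφ).aestronglyMeasurable.mul
      (stripK_cont (him2 z hz)).aestronglyMeasurable)
  · exact integrable_mul_stripK hε0 (him2 z₀ (Metric.mem_ball_self hr)) hφ hM
  · -- measurability of F' z₀
    have hcont : Continuous fun t : ℝ => stripK' ε z₀ t := by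
      have hden : ∀ t : ℝ, ((ε:ℂ)^2 + (z₀ - (t:ℂ))^2) ≠ 0 := fun t =>
        stripK_den_ne (by simpa using him2 z₀ (Metric.mem_ball_self hr))
      unfold stripK'
      fun_prop (disch := intros; first | apply hden | (apply pow_ne_zero; apply hden))
    exact ((Complex.measurable_ofReal.comp hφ).aestronglyMeasurable.mul
      hcont.aestronglyMeasurable)
  · -- the bound
    refine Filter.Eventually.of_forall fun t => fun z hz => ?_
    obtain ⟨hzm, hzr⟩ := hball z hz
    have hzim2 : z.im^2 < ε^2 := him2 z hz
    set u : ℝ := |t - z₀.re| with hudef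
    have hu0 : 0 ≤ u := abs_nonneg _
    set D : ℝ := (t - z₀.re)^2 + c' with hDdef
    have hDu : D = u^2 + c' := by rw [hDdef, hudef, _root_.sq_abs]
    have hD : 0 < D := by rw [hDu]; positivity
    -- lower bound on denominator
    have haden : D/2 ≤ ‖(ε:ℂ)^2 + (z - (t:ℂ))^2‖ := by
      have h1 := stripK_den_abs_ge (ε := ε) (z - (t:ℂ))
      have he : (z - (t:ℂ)).re = z.re - t := by simp
      have hi : (z - (t:ℂ)).im = z.im := by simp
      rw [he, hi] at h1
      have h2 : c' ≤ ε^2 - z.im^2 := by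
        rw [hc'def]
        nlinarith [neg_abs_le z.im, le_abs_self z.im, abs_nonneg z.im]
      have h3 : (t - z₀.re)^2/2 - (z.re - z₀.re)^2 ≤ (z.re - t)^2 := by
        nlinarith [sq_nonneg ((t - z₀.re) - 2*(z.re - z₀.re))]
      have h4 : (z.re - z₀.re)^2 ≤ c'/2 := by
        nlinarith [abs_nonneg (z.re - z₀.re), _root_.sq_abs (z.re - z₀.re), hr.le]
      calc D/2 ≤ (z.re - t)^2 + (ε^2 - z.im^2) := by rw [hDdef]; nlinarith
        _ ≤ _ := h1
    -- upper bound on numerator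
    have hnum : ‖z - (t:ℂ)‖ ≤ u + 2 := by
      have h1 : ‖z - (t:ℂ)‖ ≤ ‖z₀ - (t:ℂ)‖ + ‖z - z₀‖ := by
        calc ‖z - (t:ℂ)‖ = ‖(z₀ - (t:ℂ)) + (z - z₀)‖ := by ring_nf
          _ ≤ _ := norm_add_le _ _
      have h2 : ‖z₀ - (t:ℂ)‖ ≤ |z₀.re - t| + |z₀.im| := by
        simpa using Complex.norm_le_abs_re_add_abs_im (z₀ - (t:ℂ))
      have h3 : ‖z - z₀‖ < r := by simpa [Complex.dist_eq] using hz
      have h4 : |z₀.re - t| = u := by rw [hudef, abs_sub_comm]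
      have h5 : |z₀.im| < ε := hy
      calc ‖z - (t:ℂ)‖ ≤ (|z₀.re - t| + |z₀.im|) + ‖z - z₀‖ := by linarith
        _ ≤ u + 2 := by rw [h4]; nlinarith [hε1, hrε]
    -- key arithmetic inequality
    have hu2 : u + 2 ≤ ((c'+3)/c') * D := by
      rw [div_mul_eq_mul_div, le_div_iff₀ hc']
      rw [hDu]; nlinarith [mul_nonneg hc'.le (by nlinarith [sq_nonneg (2*u-1)] : (0:ℝ) ≤ u^2 - u + 1), sq_nonneg u]
    -- put it together
    rw [norm_mul, stripK'_norm hε0]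
    set aden := ‖(ε:ℂ)^2 + (z - (t:ℂ))^2‖ with hadendef
    have haden0 : 0 < aden := lt_of_lt_of_le (by positivity) haden
    have hπ : 0 < ε / Real.pi := div_pos hε0 Real.pi_pos
    have hstep1 : ‖(φ t : ℂ)‖ ≤ M := by rw [Complex.norm_real]; exact hM t
    have hstep2 : (ε / Real.pi) * ((2 * ‖z - (t:ℂ)‖) * (aden^2)⁻¹)
        ≤ (ε / Real.pi) * ((2 * (u + 2)) * (((D/2)^2)⁻¹)) := by
      have hia : (aden^2)⁻¹ ≤ ((D/2)^2)⁻¹ := by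
        apply inv_anti₀ (by positivity)
        exact pow_le_pow_left₀ (by positivity) haden 2
      have := norm_nonneg (z - (t:ℂ))
      gcongr
    have hstep3 : M * ((ε / Real.pi) * ((2 * (u + 2)) * (((D/2)^2)⁻¹))) ≤ bound t := by
      have h4 : (((D/2)^2)⁻¹) = 4/D^2 := by
        rw [div_pow]
        rw [inv_div]
        norm_num
      rw [h4]
      have h5 : M * ((ε / Real.pi) * ((2 * (u + 2)) * (4/D^2)))
          = (8*M*(ε/Real.pi)*(u+2))/D^2 := by ring
      rw [h5]
      have h6 : A * ((t - z₀.re)^2 + c')⁻¹ = (A*D)/D^2 := by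
        rw [← hDdef]
        field_simp
      rw [show bound t = A * ((t - z₀.re) ^ 2 + c')⁻¹ from rfl, h6]
      rw [div_le_div_iff₀ (by positivity) (by positivity), hAdef]
      rw [show (8*M*(ε/Real.pi)*(u+2)) * D^2 = (8*M*(ε/Real.pi)*(u+2)*D) * D from by rw [pow_two]; ring,
          show (8*M*(ε/Real.pi)*((c'+3)/c')*D) * D^2 = (8*M*(ε/Real.pi)*(((c'+3)/c')*D)*D) * D from by rw [pow_two]; ring]
      have h8 : 8*M*(ε/Real.pi)*(u+2) ≤ 8*M*(ε/Real.pi)*(((c'+3)/c')*D) :=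
        mul_le_mul_of_nonneg_left hu2 (by positivity)
      exact mul_le_mul_of_nonneg_right (mul_le_mul_of_nonneg_right h8 hD.le) hD.le
    calc ‖(φ t : ℂ)‖ * ((ε / Real.pi) * ((2 * ‖z - (t:ℂ)‖) * (aden^2)⁻¹))
        ≤ M * ((ε / Real.pi) * ((2 * (u + 2)) * (((D/2)^2)⁻¹))) :=
          mul_le_mul hstep1 hstep2 (by positivity) hM0
      _ ≤ bound t := hstep3
  · exact (integrable_inv_sq_add hc' z₀.re).const_mul A
  · refine Filter.Eventually.of_forall fun t => fun z hz => ?_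
    exact (hasDerivAt_stripK (him2 z hz) t).const_mul ((φ t : ℂ))

lemma integral_stripK_real {ε : ℝ} (hε : 0 < ε) (x : ℝ) :
    ∫ t : ℝ, stripK ε ((x:ℂ) - (t:ℂ)) = 1 := by
  have h1 : ∀ t : ℝ, stripK ε ((x:ℂ) - (t:ℂ))
      = (((ε/Real.pi) * (ε^2 + (t - x)^2)⁻¹ : ℝ) : ℂ) := by
    intro t
    rw [stripK]
    push_cast
    rw [show ((x:ℂ) - t)^2 = ((t:ℂ) - x)^2 by ring]
  simp_rw [h1]
  rw [show ((fun t : ℝ => (((ε/Real.pi) * (ε^2 + (t - x)^2)⁻¹ : ℝ) : ℂ)))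
      = fun t : ℝ => ((RCLike.ofReal ((ε/Real.pi) * (ε^2 + (t - x)^2)⁻¹)) : ℂ) from rfl]
  rw [integral_ofReal]
  rw [show ∀ y : ℝ, ((RCLike.ofReal y) : ℂ) = (y : ℂ) from fun _ => rfl]
  have h2 : (∫ t : ℝ, (ε/Real.pi) * (ε^2 + (t - x)^2)⁻¹)
      = ∫ t : ℝ, (ε/Real.pi) * (ε^2 + t^2)⁻¹ :=
    integral_sub_right_eq_self (fun t : ℝ => (ε/Real.pi) * (ε^2 + t^2)⁻¹) x
  rw [h2]
  have h3 : ∀ t : ℝ, (ε^2 + t^2)⁻¹ = ε⁻¹ * ε⁻¹ * (1 + (t/ε)^2)⁻¹ := by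
    intro t
    field_simp
  simp_rw [h3, integral_const_mul]
  rw [show (∫ t : ℝ, (1 + (t/ε)^2)⁻¹) = |ε| • ∫ t : ℝ, (1 + t^2)⁻¹ from
    MeasureTheory.Measure.integral_comp_div (fun t : ℝ => (1 + t^2)⁻¹) ε]
  rw [integral_univ_inv_one_add_sq, smul_eq_mul, _root_.abs_of_pos hε]
  have hπ : (Real.pi : ℂ) ≠ 0 := Complex.ofReal_ne_zero.mpr Real.pi_ne_zero
  have hεc : (ε : ℂ) ≠ 0 := Complex.ofReal_ne_zero.mpr hε.ne'
  push_cast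
  field_simp

lemma isOpen_strip (ε : ℝ) : IsOpen {z : ℂ | -ε < z.im ∧ z.im < ε} := by
  have : {z : ℂ | -ε < z.im ∧ z.im < ε} = Complex.im ⁻¹' (Set.Ioo (-ε) ε) := rfl
  rw [this]
  exact isOpen_Ioo.preimage Complex.continuous_im

lemma isPreconnected_strip (ε : ℝ) : IsPreconnected {z : ℂ | -ε < z.im ∧ z.im < ε} := by
  have : {z : ℂ | -ε < z.im ∧ z.im < ε} = Complex.imLm ⁻¹' (Set.Ioo (-ε) ε) := rfl
  rw [this]
  exact ((convex_Ioo (-ε) ε).linear_preimage Complex.imLm).isPreconnected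

lemma diffOn_integral_stripK {ε : ℝ} (hε : ε ∈ Set.Ioo (0:ℝ) 1)
    {φ : ℝ → ℝ} (hφ : Measurable φ) {M : ℝ} (hM : ∀ t, |φ t| ≤ M) :
    DifferentiableOn ℂ (fun z => ∫ t : ℝ, (φ t : ℂ) * stripK ε (z - (t:ℂ)))
      {z : ℂ | -ε < z.im ∧ z.im < ε} :=
  fun _ hz => (diffAt_integral_stripK hε hφ hM hz).differentiableWithinAt

lemma integral_stripK_eq_one {ε : ℝ} (hε : ε ∈ Set.Ioo (0:ℝ) 1)
    {z : ℂ} (hz : -ε < z.im ∧ z.im < ε) :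
    ∫ t : ℝ, stripK ε (z - (t:ℂ)) = 1 := by
  set S : Set ℂ := {z : ℂ | -ε < z.im ∧ z.im < ε} with hSdef
  set h : ℂ → ℂ := fun z => ∫ t : ℝ, ((1:ℝ):ℂ) * stripK ε (z - (t:ℂ)) with hhdef
  have hM : ∀ t : ℝ, |(1:ℝ)| ≤ 1 := fun t => by norm_num
  have hdiff : DifferentiableOn ℂ h S := diffOn_integral_stripK hε measurable_const hM
  have han : AnalyticOnNhd ℂ h S := hdiff.analyticOnNhd (isOpen_strip ε)
  have hreal : ∀ x : ℝ, h (x:ℂ) = 1 := by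
    intro x
    rw [hhdef]
    simp only [Complex.ofReal_one, one_mul]
    exact integral_stripK_real hε.1 x
  have h0 : (0:ℂ) ∈ S := by
    constructor <;> simp [hε.1, neg_neg] <;> linarith [hε.1]
  have hseq : Filter.Tendsto (fun n : ℕ => (((1:ℝ)/(n+1) : ℝ) : ℂ)) Filter.atTop (𝓝[≠] 0) := by
    apply tendsto_nhdsWithin_of_tendsto_nhds_of_eventually_within
    · have h1 := tendsto_one_div_add_atTop_nhds_zero_nat (𝕜 := ℝ)
      have h2 := (Complex.continuous_ofReal.tendsto 0).comp h1
      simpa [Function.comp_def] using h2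
    · refine Filter.Eventually.of_forall fun n => ?_
      simp only [Set.mem_compl_iff, Set.mem_singleton_iff]
      exact Complex.ofReal_ne_zero.mpr (by positivity)
  have hfreq : ∃ᶠ w in 𝓝[≠] (0:ℂ), h w = (fun _ => (1:ℂ)) w :=
    hseq.frequently (Filter.Frequently.of_forall fun n => hreal _)
  have heq := han.eqOn_of_preconnected_of_frequently_eq analyticOnNhd_const
    (isPreconnected_strip ε) h0 hfreq
  have := heq hz
  rw [hhdef] at this
  simp only [Complex.ofReal_one, one_mul] at this
  exact this

lemma tail_inv_sq {δ : ℝ} (hδ : 0 < δ) :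
    IntegrableOn (fun s : ℝ => (s^2)⁻¹) {s : ℝ | δ ≤ |s|} ∧
    ∫ s in {s : ℝ | δ ≤ |s|}, (s^2)⁻¹ = 2/δ := by
  have hE : {s : ℝ | δ ≤ |s|} = Iic (-δ) ∪ Ici δ := by
    ext s
    rw [mem_setOf_eq, le_abs, Set.mem_union, mem_Iic, mem_Ici]
    constructor
    · rintro (h | h)
      · right; exact h
      · left; linarith
    · rintro (h | h)
      · right; linarith
      · left; exact h
  -- Ioi part
  have hcongr : ∀ s ∈ Ioi δ, s ^ (-2 : ℝ) = (s^2)⁻¹ := by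
    intro s hs
    have hs0 : 0 < s := hδ.trans hs
    rw [Real.rpow_neg hs0.le, show (2:ℝ) = ((2:ℕ):ℝ) by norm_num, Real.rpow_natCast]
  have hIoi_int : IntegrableOn (fun s : ℝ => (s^2)⁻¹) (Ioi δ) := by
    refine (integrableOn_Ioi_rpow_of_lt (by norm_num : (-2:ℝ) < -1) hδ).congr_fun ?_ measurableSet_Ioi
    exact hcongr
  have hIoi_val : ∫ s in Ioi δ, (s^2)⁻¹ = δ⁻¹ := by
    rw [← setIntegral_congr_fun measurableSet_Ioi hcongr]
    rw [integral_Ioi_rpow_of_lt (by norm_num : (-2:ℝ) < -1) hδ]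
    norm_num
    rw [Real.rpow_neg_one]
  have hIci_int : IntegrableOn (fun s : ℝ => (s^2)⁻¹) (Ici δ) := by
    rwa [integrableOn_Ici_iff_integrableOn_Ioi]
  have hIci_val : ∫ s in Ici δ, (s^2)⁻¹ = δ⁻¹ := by
    rw [integral_Ici_eq_integral_Ioi]; exact hIoi_val
  -- Iic part via reflection
  have hmap : (volume : Measure ℝ).restrict (Iic (-δ))
      = Measure.map Neg.neg ((volume : Measure ℝ).restrict (Ici δ)) := by
    conv_lhs => rw [← Measure.map_neg_eq_self (volume : Measure ℝ)]
    rw [Measure.restrict_map measurable_neg measurableSet_Iic]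
    have hpre : (Neg.neg ⁻¹' Iic (-δ) : Set ℝ) = Ici δ := by
      ext s
      simp only [Set.mem_preimage, mem_Iic, mem_Ici]
      constructor <;> intro h <;> linarith
    rw [hpre]
  have hA : MeasurableEmbedding (Neg.neg : ℝ → ℝ) :=
    (Homeomorph.neg ℝ).isClosedEmbedding.measurableEmbedding
  have hIic_int : IntegrableOn (fun s : ℝ => (s^2)⁻¹) (Iic (-δ)) := by
    rw [IntegrableOn, hmap, hA.integrable_map_iff]
    have : ((fun s : ℝ => (s^2)⁻¹) ∘ Neg.neg) = fun s : ℝ => (s^2)⁻¹ := by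
      funext s; simp [Function.comp, neg_sq]
    rw [this]
    exact hIci_int
  have hIic_val : ∫ s in Iic (-δ), (s^2)⁻¹ = δ⁻¹ := by
    have h1 := integral_comp_neg_Iic (-δ) (fun s : ℝ => (s^2)⁻¹)
    simp only [neg_sq, neg_neg] at h1
    rw [h1]
    rw [← integral_Ici_eq_integral_Ioi]
    exact hIci_val
  have hdisj : Disjoint (Iic (-δ)) (Ici δ) := by
    rw [Set.Iic_disjoint_Ici]
    intro h; linarith
  constructor
  · rw [hE]; exact hIic_int.union hIci_int
  · rw [hE, setIntegral_union hdisj measurableSet_Ici hIic_int hIci_int, hIic_val, hIci_val]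
    rw [eq_div_iff hδ.ne']
    field_simp
    norm_num


/-- Let `C > 0`, let `f : ℝ → [0, C]` be measurable, and let
`ε ∈ (0, 1)`.  Then there exists a function `g` holomorphic on the strip
`S_ε = {x + iy : -ε < y < ε}` with `Re g(z) ≥ 0` on `S_ε`, such that for every
`δ > 0` and every `z₀ = x₀ + i y₀ ∈ S_ε` with `f(x) = f(x₀)` for all
`x ∈ (x₀ − δ, x₀ + δ)`, one has `|g(z₀) − f(x₀)| ≤ 2Cε/(πδ)`. -/
theorem exists_holomorphic_approximation_on_strip
    (C : ℝ) (hC : 0 < C) (f : ℝ → ℝ) (hf : Measurable f)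
    (hf' : ∀ x : ℝ, f x ∈ Set.Icc 0 C)
    (ε : ℝ) (hε : ε ∈ Set.Ioo (0 : ℝ) 1) :
    ∃ g : ℂ → ℂ,
      DifferentiableOn ℂ g {z : ℂ | -ε < z.im ∧ z.im < ε} ∧
      (∀ z ∈ {z : ℂ | -ε < z.im ∧ z.im < ε}, 0 ≤ (g z).re) ∧
      ∀ δ > (0 : ℝ), ∀ z₀ ∈ {z : ℂ | -ε < z.im ∧ z.im < ε},
        (∀ x ∈ Set.Ioo (z₀.re - δ) (z₀.re + δ), f x = f z₀.re) →
        ‖g z₀ - (f z₀.re : ℂ)‖ ≤ 2 * C * ε / (Real.pi * δ) := by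
  obtain ⟨hε0, hε1⟩ := hε
  have hfC : ∀ t, |f t| ≤ C := fun t =>
    abs_le.mpr ⟨by linarith [(hf' t).1], (hf' t).2⟩
  refine ⟨fun z => ∫ t : ℝ, (f t : ℂ) * stripK ε (z - (t:ℂ)), ?_, ?_, ?_⟩
  · exact diffOn_integral_stripK ⟨hε0, hε1⟩ hf hfC
  · intro z hz
    have hzim : z.im^2 < ε^2 := by obtain ⟨h1, h2⟩ := hz; nlinarith
    have hint : Integrable (fun t : ℝ => (f t : ℂ) * stripK ε (z - (t:ℂ))) :=
      integrable_mul_stripK hε0 hzim hf hfC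
    simp only
    rw [show (∫ (t : ℝ), (f t : ℂ) * stripK ε (z - (t:ℂ))).re
        = ∫ (t : ℝ), RCLike.re ((f t : ℂ) * stripK ε (z - (t:ℂ))) from (integral_re hint).symm]
    apply integral_nonneg
    intro t
    show (0:ℝ) ≤ ((f t : ℂ) * stripK ε (z - (t:ℂ))).re
    rw [Complex.re_ofReal_mul]
    refine mul_nonneg (hf' t).1 (stripK_re_nonneg hε0 ?_)
    simpa using hzim
  · intro δ hδ z₀ hz₀ hloc
    have hzim : z₀.im^2 < ε^2 := by
      obtain ⟨h1, h2⟩ := hz₀; nlinarith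
    have hc : 0 < ε^2 - z₀.im^2 := by linarith
    have hint1 : Integrable (fun t : ℝ => (f t : ℂ) * stripK ε (z₀ - (t:ℂ))) :=
      integrable_mul_stripK hε0 hzim hf hfC
    have hint2 : Integrable (fun t : ℝ => ((f z₀.re : ℝ) : ℂ) * stripK ε (z₀ - (t:ℂ))) :=
      integrable_mul_stripK hε0 hzim measurable_const (fun _ => hfC z₀.re)
    have hone := integral_stripK_eq_one ⟨hε0, hε1⟩ hz₀
    have hkey : (∫ t : ℝ, (f t : ℂ) * stripK ε (z₀ - (t:ℂ))) - ((f z₀.re : ℝ) : ℂ)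
        = ∫ t : ℝ, ((f t : ℂ) - ((f z₀.re : ℝ) : ℂ)) * stripK ε (z₀ - (t:ℂ)) := by
      have h1 : ∫ t : ℝ, ((f t : ℂ) - ((f z₀.re : ℝ) : ℂ)) * stripK ε (z₀ - (t:ℂ))
          = (∫ t : ℝ, (f t : ℂ) * stripK ε (z₀ - (t:ℂ)))
            - ∫ t : ℝ, ((f z₀.re : ℝ) : ℂ) * stripK ε (z₀ - (t:ℂ)) := by
        rw [← integral_sub hint1 hint2]
        congr 1; funext t; ring
      rw [h1, integral_const_mul, hone, mul_one]
    simp only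
    rw [hkey]
    -- the bound function
    have hmeasE : MeasurableSet {s : ℝ | δ ≤ |s|} :=
      (isClosed_le continuous_const _root_.continuous_abs).measurableSet
    set G : ℝ → ℝ := Set.indicator {s : ℝ | δ ≤ |s|} (fun s => (s^2)⁻¹) with hGdef
    obtain ⟨hGint, hGval⟩ := tail_inv_sq hδ
    have hGint' : Integrable G := (integrable_indicator_iff hmeasE).mpr hGint
    have hGval' : ∫ s, G s = 2/δ := by
      rw [hGdef, integral_indicator hmeasE]; exact hGval
    set c₀ : ℝ := C * (ε / Real.pi) with hc₀def
    have hBint : Integrable (fun t : ℝ => c₀ * G (t - z₀.re)) :=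
      (hGint'.comp_sub_right z₀.re).const_mul c₀
    have hBval : ∫ t : ℝ, c₀ * G (t - z₀.re) = c₀ * (2/δ) := by
      rw [integral_const_mul, integral_sub_right_eq_self G z₀.re, hGval']
    have hle : ∀ t : ℝ, ‖((f t : ℂ) - ((f z₀.re : ℝ) : ℂ)) * stripK ε (z₀ - (t:ℂ))‖
        ≤ c₀ * G (t - z₀.re) := by
      intro t
      by_cases ht : δ ≤ |t - z₀.re|
      · have hGt : G (t - z₀.re) = ((t - z₀.re)^2)⁻¹ :=
          Set.indicator_of_mem (by simpa using ht) _
        rw [hGt, norm_mul]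
        have h1 : ‖(f t : ℂ) - ((f z₀.re : ℝ) : ℂ)‖ ≤ C := by
          rw [← Complex.ofReal_sub, Complex.norm_real]
          exact abs_le.mpr ⟨by linarith [(hf' t).1, (hf' z₀.re).2],
            by linarith [(hf' t).2, (hf' z₀.re).1]⟩
        have hpos : 0 < (t - z₀.re)^2 := by
          have : t - z₀.re ≠ 0 := by
            intro h0; rw [h0] at ht; simp at ht; linarith
          positivity
        have h2 : ‖stripK ε (z₀ - (t:ℂ))‖ ≤ (ε/Real.pi) * ((t - z₀.re)^2)⁻¹ := by
          have h3 := stripK_norm_le hε0 (w := z₀ - (t:ℂ)) (by simpa using hzim)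
          have he : (z₀ - (t:ℂ)).re = z₀.re - t := by simp
          have hi : (z₀ - (t:ℂ)).im = z₀.im := by simp
          rw [he, hi] at h3
          refine h3.trans ?_
          have h4 : (t - z₀.re)^2 ≤ (z₀.re - t)^2 + (ε^2 - z₀.im^2) := by nlinarith
          have h5 : ((z₀.re - t)^2 + (ε^2 - z₀.im^2))⁻¹ ≤ ((t - z₀.re)^2)⁻¹ :=
            inv_anti₀ hpos h4
          exact mul_le_mul_of_nonneg_left h5 (div_nonneg hε0.le Real.pi_pos.le)
        calc ‖(f t : ℂ) - ((f z₀.re : ℝ) : ℂ)‖ * ‖stripK ε (z₀ - (t:ℂ))‖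
            ≤ C * ((ε/Real.pi) * ((t - z₀.re)^2)⁻¹) :=
              mul_le_mul h1 h2 (norm_nonneg _) hC.le
          _ = c₀ * ((t - z₀.re)^2)⁻¹ := by rw [hc₀def]; ring
      · push_neg at ht
        have hft : f t = f z₀.re := by
          apply hloc
          rw [abs_lt] at ht
          constructor <;> [linarith [ht.1]; linarith [ht.2]]
        have hG0 : G (t - z₀.re) = 0 :=
          Set.indicator_of_notMem (by simpa using not_le.mpr ht) _
        rw [hG0, mul_zero, hft]
        simp
    calc ‖∫ t : ℝ, ((f t : ℂ) - ((f z₀.re : ℝ) : ℂ)) * stripK ε (z₀ - (t:ℂ))‖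
        ≤ ∫ t : ℝ, c₀ * G (t - z₀.re) :=
          norm_integral_le_of_norm_le hBint (Filter.Eventually.of_forall hle)
      _ = c₀ * (2/δ) := hBval
      _ = 2 * C * ε / (Real.pi * δ) := by
          rw [hc₀def]
          field_simp
end

section
/- Let V = {(z,w) ∈ ℂ² : |w| < 1 + |z|²}. Then there exists an injective holomorphic map Φ : ℂ² → ℂ² whose image is contained in V, i.e. |π²(Φ(p))| < 1 + |π¹(Φ(p))|² for every p ∈ ℂ². -/
/-!
We construct an injective holomorphic map `Φ : ℂ² → ℂ²` whose image is contained in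
`V = {(z,w) : |w| < 1 + |z|²}`, as a limit of compositions of polynomial shears
(a Fatou–Bieberbach-type construction).

The map is `Φ = lim_n g 0 ∘ g 1 ∘ ⋯ ∘ g (n-1)` where
`g j (z,w) = (z - a^j (w - a^j z²)², w - a^j z²)` with `a = 1/32`.
Each `g j` is a composition of two shears (hence injective), the coefficients decay
geometrically which gives locally uniform convergence (after a rescaling trick),
and the image avoids the "horn" `S = {8(1+|z|²) ≤ |w|}` because `S` is invariant
under the polynomial automorphism `F` which conjugates `Φ` to the scaling `p ↦ a • p`.
-/

open Filter Topology ContinuousLinearMap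
set_option linter.unreachableTactic false
set_option linter.unusedTactic false
set_option linter.unnecessarySeqFocus false
noncomputable section
namespace FB

def a : ℂ := 1/32
lemma a_ne : a ≠ 0 := by norm_num [a]
def aR : ℝ := 1/32
def sR : ℝ := 1/512
lemma norm_a_pow (j : ℕ) : ‖a^j‖ = aR^j := by
  rw [norm_pow]; congr 1; rw [a, aR, norm_div]; simp
lemma aR_pos : (0:ℝ) < aR := by norm_num [aR]
lemma aR_pow_pos (j : ℕ) : 0 < aR^j := pow_pos aR_pos j
lemma aR_pow_le_one (j : ℕ) : aR^j ≤ 1 :=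
  pow_le_one₀ (by norm_num [aR]) (by norm_num [aR])
lemma sR_pos : (0:ℝ) < sR := by norm_num [sR]
lemma pow_half_le_one (n : ℕ) : ((1:ℝ)/2)^n ≤ 1 :=
  pow_le_one₀ (by norm_num) (by norm_num)
lemma pow_half_pos (n : ℕ) : (0:ℝ) < (1/2)^n := by positivity
lemma aR_le_half_pow (n : ℕ) : aR^n ≤ (1/2)^n :=
  pow_le_pow_left₀ (by norm_num [aR]) (by norm_num [aR]) n

def g (j : ℕ) (p : ℂ × ℂ) : ℂ × ℂ :=
  (p.1 - a^j * ((p.2 - a^j * (p.1*p.1)) * (p.2 - a^j * (p.1*p.1))), p.2 - a^j * (p.1*p.1))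

def T : ℕ → (ℂ × ℂ) → ℂ × ℂ
  | 0 => id
  | (n+1) => fun p => T n (g n p)

lemma T_succ (n : ℕ) (p : ℂ × ℂ) : T (n+1) p = T n (g n p) := rfl

def F (p : ℂ × ℂ) : ℂ × ℂ :=
  (a * (p.1 + p.2*p.2), a * (p.2 + (p.1 + p.2*p.2)*(p.1 + p.2*p.2)))

def rho (n : ℕ) : ℝ := sR/2 + 5*sR^2*aR^n

lemma g_inj (j : ℕ) : Function.Injective (g j) := by
  intro p q h
  have h2 : p.2 - a^j * (p.1*p.1) = q.2 - a^j * (q.1*q.1) := congrArg Prod.snd h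
  have h1 := congrArg Prod.fst h
  simp only [g] at h1
  rw [h2] at h1
  have hp1 : p.1 = q.1 := by linear_combination h1
  have hp2 : p.2 = q.2 := by linear_combination h2 + a^j * (p.1 + q.1) * hp1
  exact Prod.ext hp1 hp2

lemma T_inj (n : ℕ) : Function.Injective (T n) := by
  induction n with
  | zero => exact fun p q h => h
  | succ n ih => exact fun p q h => g_inj n (ih h)

lemma T_zero_eval : ∀ p, T 0 p = p := fun _ => rfl

lemma T_at_zero (n : ℕ) : T n 0 = 0 := by
  induction n with
  | zero => rfl
  | succ n ih => rw [T_succ]; convert ih using 2; simp [g]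

lemma smul_g_succ (j : ℕ) (p : ℂ × ℂ) : a • g (j+1) p = g j (a • p) := by
  simp only [g, Prod.smul_def, smul_eq_mul, Prod.mk.injEq]
  constructor <;> ring

lemma smul_g (m j : ℕ) (p : ℂ × ℂ) : a^m • g (m+j) p = g j (a^m • p) := by
  induction m generalizing p with
  | zero => simp
  | succ m ih =>
      have h1 : m + 1 + j = (m + j) + 1 := by omega
      calc a^(m+1) • g (m+1+j) p = a^m • (a • g ((m+j)+1) p) := by
            rw [h1, pow_succ, mul_smul]
        _ = a^m • g (m+j) (a • p) := by rw [smul_g_succ]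
        _ = g j (a^m • (a • p)) := ih (a • p)
        _ = g j (a^(m+1) • p) := by rw [smul_smul, ← pow_succ]

lemma T_shift (m k : ℕ) (p : ℂ × ℂ) : T (m+k) p = T m ((a^m)⁻¹ • T k (a^m • p)) := by
  induction k generalizing p with
  | zero =>
      simp only [Nat.add_zero, T, _root_.id]
      rw [smul_smul, inv_mul_cancel₀ (pow_ne_zero m a_ne), one_smul]
  | succ k ih =>
      rw [show m + (k+1) = (m+k) + 1 by omega, T_succ, ih (g (m+k) p), T_succ, ← smul_g m k p]

lemma F_g0 (p : ℂ × ℂ) : F (g 0 p) = a • p := by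
  simp only [F, g, pow_zero, one_mul, Prod.smul_def, smul_eq_mul, Prod.mk.injEq]
  constructor <;> ring

lemma F_T (n : ℕ) (p : ℂ × ℂ) : F (T (n+1) p) = T n (a • p) := by
  induction n generalizing p with
  | zero => exact F_g0 p
  | succ n ih =>
      rw [show T (n+1+1) p = T (n+1) (g (n+1) p) from rfl, ih (g (n+1) p), T_succ]
      rw [show a • g (n+1) p = g n (a • p) from smul_g_succ n p]

-- the "u" quantity
lemma u_bound (j : ℕ) (p : ℂ × ℂ) (hp : ‖p‖ ≤ sR) :
    ‖p.2 - a^j * (p.1*p.1)‖ ≤ 2*sR := by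
  have h1 : ‖p.1‖ ≤ sR := le_trans (norm_fst_le p) hp
  have h2 : ‖p.2‖ ≤ sR := le_trans (norm_snd_le p) hp
  have hs : (0:ℝ) < sR := by norm_num [sR]
  calc ‖p.2 - a^j * (p.1*p.1)‖ ≤ ‖p.2‖ + ‖a^j * (p.1*p.1)‖ := norm_sub_le _ _
    _ = ‖p.2‖ + aR^j * (‖p.1‖*‖p.1‖) := by rw [norm_mul, norm_mul, norm_a_pow]
    _ ≤ sR + 1 * (sR*sR) := by
        gcongr <;> first | exact aR_pow_le_one j | exact h1
    _ ≤ 2*sR := by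
        have hs' : sR ≤ 1 := by norm_num [sR]
        nlinarith

lemma L1 (j : ℕ) (p : ℂ × ℂ) (hp : ‖p‖ ≤ sR) :
    ‖g j p - p‖ ≤ 4*sR^2 * aR^j := by
  have h1 : ‖p.1‖ ≤ sR := le_trans (norm_fst_le p) hp
  have hu := u_bound j p hp
  have hs : (0:ℝ) < sR := by norm_num [sR]
  have haj := aR_pow_pos j
  rw [norm_prod_le_iff]
  constructor
  · show ‖(g j p).1 - p.1‖ ≤ _
    have : (g j p).1 - p.1 = -(a^j * (p.2 - a^j * (p.1*p.1)) * (p.2 - a^j * (p.1*p.1))) := by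
      simp only [g]; ring
    rw [this, norm_neg, norm_mul, norm_mul, norm_a_pow]
    calc aR^j * ‖p.2 - a^j * (p.1*p.1)‖ * ‖p.2 - a^j * (p.1*p.1)‖
        ≤ aR^j * (2*sR) * (2*sR) := by gcongr <;> exact hu
      _ = 4*sR^2*aR^j := by ring
  · show ‖(g j p).2 - p.2‖ ≤ _
    have : (g j p).2 - p.2 = -(a^j * (p.1*p.1)) := by simp only [g]; ring
    rw [this, norm_neg, norm_mul, norm_mul, norm_a_pow]
    calc aR^j * (‖p.1‖ * ‖p.1‖) ≤ aR^j * (sR * sR) := by gcongr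
      _ ≤ 4*sR^2*aR^j := by nlinarith

lemma L2 (j : ℕ) (p q : ℂ × ℂ) (hp : ‖p‖ ≤ sR) (hq : ‖q‖ ≤ sR) :
    ‖(g j p - p) - (g j q - q)‖ ≤ 8*sR*aR^j * ‖p - q‖ := by
  have hp1 : ‖p.1‖ ≤ sR := le_trans (norm_fst_le p) hp
  have hq1 : ‖q.1‖ ≤ sR := le_trans (norm_fst_le q) hq
  have hd1 : ‖p.1 - q.1‖ ≤ ‖p - q‖ := norm_fst_le (p - q)
  have hd2 : ‖p.2 - q.2‖ ≤ ‖p - q‖ := norm_snd_le (p - q)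
  have hu := u_bound j p hp
  have hv := u_bound j q hq
  have hs : (0:ℝ) < sR := by norm_num [sR]
  have hs' : sR ≤ 1 := by norm_num [sR]
  have haj := aR_pow_pos j
  have haj1 := aR_pow_le_one j
  have hdn : (0:ℝ) ≤ ‖p - q‖ := norm_nonneg _
  set u := p.2 - a^j * (p.1*p.1) with hu_def
  set v := q.2 - a^j * (q.1*q.1) with hv_def
  have huv : ‖u - v‖ ≤ (1 + 2*sR*aR^j) * ‖p - q‖ := by
    have : u - v = (p.2 - q.2) - a^j * ((p.1 + q.1) * (p.1 - q.1)) := by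
      rw [hu_def, hv_def]; ring
    rw [this]
    calc ‖(p.2 - q.2) - a^j * ((p.1 + q.1) * (p.1 - q.1))‖
        ≤ ‖p.2 - q.2‖ + ‖a^j * ((p.1 + q.1) * (p.1 - q.1))‖ := norm_sub_le _ _
      _ ≤ ‖p - q‖ + aR^j * ((‖p.1‖ + ‖q.1‖) * ‖p.1 - q.1‖) := by
          rw [norm_mul, norm_mul, norm_a_pow]
          gcongr
          exact norm_add_le _ _
      _ ≤ ‖p - q‖ + aR^j * ((sR + sR) * ‖p - q‖) := by gcongr
      _ = (1 + 2*sR*aR^j) * ‖p - q‖ := by ring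
  rw [norm_prod_le_iff]
  constructor
  · show ‖((g j p - p) - (g j q - q)).1‖ ≤ _
    have : ((g j p - p) - (g j q - q)).1 = -(a^j * ((u + v) * (u - v))) := by
      simp only [Prod.fst_sub, g, hu_def, hv_def]; ring
    rw [this, norm_neg, norm_mul, norm_mul, norm_a_pow]
    calc aR^j * ((‖u + v‖) * ‖u - v‖)
        ≤ aR^j * ((‖u‖ + ‖v‖) * ‖u - v‖) := by gcongr; exact norm_add_le _ _
      _ ≤ aR^j * ((2*sR + 2*sR) * ((1 + 2*sR*aR^j) * ‖p - q‖)) := by gcongr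
      _ ≤ aR^j * ((2*sR + 2*sR) * (2 * ‖p - q‖)) := by
          gcongr
          have h1 : sR*aR^j ≤ sR := mul_le_of_le_one_right hs.le (aR_pow_le_one j)
          have h2 : sR ≤ 1/2 := by norm_num [sR]
          nlinarith
      _ = 8 * (sR * (aR^j * ‖p - q‖)) := by ring
      _ = 8*sR*aR^j * ‖p - q‖ := by ring
  · show ‖((g j p - p) - (g j q - q)).2‖ ≤ _
    have : ((g j p - p) - (g j q - q)).2 = -(a^j * ((p.1 + q.1) * (p.1 - q.1))) := by
      simp only [Prod.snd_sub, g]; ring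
    rw [this, norm_neg, norm_mul, norm_mul, norm_a_pow]
    calc aR^j * ((‖p.1 + q.1‖) * ‖p.1 - q.1‖)
        ≤ aR^j * ((‖p.1‖ + ‖q.1‖) * ‖p.1 - q.1‖) := by gcongr; exact norm_add_le _ _
      _ ≤ aR^j * ((sR + sR) * ‖p - q‖) := by gcongr
      _ = 2 * (sR * (aR^j * ‖p - q‖)) := by ring
      _ ≤ 8 * (sR * (aR^j * ‖p - q‖)) := by
          have : 0 ≤ sR * (aR^j * ‖p - q‖) :=
            mul_nonneg hs.le (mul_nonneg haj.le hdn)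
          linarith
      _ = 8*sR*aR^j * ‖p - q‖ := by ring



lemma rho_le (n : ℕ) : rho n ≤ sR := by
  have h := aR_pow_le_one n
  have h2 := aR_pow_pos n
  rw [rho]; norm_num [sR]; nlinarith

lemma half_le_rho (n : ℕ) : sR/2 ≤ rho n := by
  have h2 := (aR_pow_pos n).le
  rw [rho]; nlinarith [sq_nonneg sR, mul_nonneg (mul_nonneg (by norm_num : (0:ℝ) ≤ 5) (sq_nonneg sR)) h2]

lemma rho_succ (n : ℕ) : rho (n+1) + 4*sR^2*aR^n ≤ rho n := by
  have e1 : aR^(n+1) = aR^n * aR := pow_succ _ _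
  rw [rho, rho, e1, aR, sR]
  have h2 : (0:ℝ) ≤ (1/32)^n := by positivity
  norm_num
  nlinarith [h2]

lemma mem_step {n : ℕ} {x : ℂ × ℂ} (hx : ‖x‖ ≤ rho (n+1)) : ‖g n x‖ ≤ rho n := by
  have hxs : ‖x‖ ≤ sR := le_trans hx (rho_le (n+1))
  have h1 := L1 n x hxs
  calc ‖g n x‖ = ‖x + (g n x - x)‖ := by ring_nf
    _ ≤ ‖x‖ + ‖g n x - x‖ := norm_add_le _ _
    _ ≤ rho (n+1) + 4*sR^2*aR^n := by gcongr
    _ ≤ rho n := rho_succ n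

lemma g_lip_up {n : ℕ} {x y : ℂ × ℂ} (hx : ‖x‖ ≤ sR) (hy : ‖y‖ ≤ sR) :
    ‖g n x - g n y‖ ≤ (1 + 8*sR*aR^n) * ‖x - y‖ := by
  have h := L2 n x y hx hy
  calc ‖g n x - g n y‖ = ‖(x - y) + ((g n x - x) - (g n y - y))‖ := by ring_nf
    _ ≤ ‖x - y‖ + ‖(g n x - x) - (g n y - y)‖ := norm_add_le _ _
    _ ≤ ‖x - y‖ + 8*sR*aR^n * ‖x - y‖ := by gcongr
    _ = (1 + 8*sR*aR^n) * ‖x - y‖ := by ring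

lemma g_lip_low {n : ℕ} {x y : ℂ × ℂ} (hx : ‖x‖ ≤ sR) (hy : ‖y‖ ≤ sR) :
    (1 - 8*sR*aR^n) * ‖x - y‖ ≤ ‖g n x - g n y‖ := by
  have h := L2 n x y hx hy
  have h2 : ‖x - y‖ - ‖(g n x - x) - (g n y - y)‖ ≤ ‖g n x - g n y‖ := by
    have : ‖x - y‖ ≤ ‖g n x - g n y‖ + ‖(g n x - x) - (g n y - y)‖ := by
      calc ‖x - y‖ = ‖(g n x - g n y) - ((g n x - x) - (g n y - y))‖ := by ring_nf
        _ ≤ ‖g n x - g n y‖ + ‖(g n x - x) - (g n y - y)‖ := norm_sub_le _ _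
    linarith
  nlinarith [norm_nonneg (x - y)]


lemma T_lip_up (n : ℕ) : ∀ x y : ℂ × ℂ, ‖x‖ ≤ rho n → ‖y‖ ≤ rho n →
    ‖T n x - T n y‖ ≤ (2 - (1/2:ℝ)^n) * ‖x - y‖ := by
  induction n with
  | zero =>
      intro x y _ _
      simp only [T, _root_.id]
      nlinarith [norm_nonneg (x - y)]
  | succ n ih =>
      intro x y hx hy
      have hgx := mem_step hx
      have hgy := mem_step hy
      have hxs : ‖x‖ ≤ sR := le_trans hx (rho_le _)
      have hys : ‖y‖ ≤ sR := le_trans hy (rho_le _)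
      have step := g_lip_up (n := n) hxs hys
      have A := pow_half_le_one n
      have B := aR_le_half_pow n
      have Bp := (aR_pow_pos n).le
      have Ap := (pow_half_pos n).le
      have hd := norm_nonneg (x - y)
      calc ‖T (n+1) x - T (n+1) y‖ = ‖T n (g n x) - T n (g n y)‖ := rfl
        _ ≤ (2 - (1/2:ℝ)^n) * ‖g n x - g n y‖ := ih _ _ hgx hgy
        _ ≤ (2 - (1/2:ℝ)^n) * ((1 + 8*sR*aR^n) * ‖x - y‖) := by
            apply mul_le_mul_of_nonneg_left step
            nlinarith
        _ = ((2 - (1/2:ℝ)^n) * (1 + 8*sR*aR^n)) * ‖x - y‖ := by ring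
        _ ≤ (2 - (1/2:ℝ)^(n+1)) * ‖x - y‖ := by
            apply mul_le_mul_of_nonneg_right ?_ hd
            have e1 : ((1:ℝ)/2)^(n+1) = (1/2)^n * (1/2) := pow_succ _ _
            rw [e1, sR]
            nlinarith [mul_nonneg Ap Bp]

lemma T_lip_low (n : ℕ) : ∀ x y : ℂ × ℂ, ‖x‖ ≤ rho n → ‖y‖ ≤ rho n →
    (1/2) * (1 + (1/2:ℝ)^n) * ‖x - y‖ ≤ ‖T n x - T n y‖ := by
  induction n with
  | zero =>
      intro x y _ _
      simp only [T, _root_.id]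
      nlinarith [norm_nonneg (x - y)]
  | succ n ih =>
      intro x y hx hy
      have hgx := mem_step hx
      have hgy := mem_step hy
      have hxs : ‖x‖ ≤ sR := le_trans hx (rho_le _)
      have hys : ‖y‖ ≤ sR := le_trans hy (rho_le _)
      have step := g_lip_low (n := n) hxs hys
      have A := pow_half_le_one n
      have B := aR_le_half_pow n
      have Bp := (aR_pow_pos n).le
      have Ap := (pow_half_pos n).le
      have hd := norm_nonneg (x - y)
      have hgd := norm_nonneg (g n x - g n y)
      have Ble1 := aR_pow_le_one n
      calc (1/2) * (1 + (1/2:ℝ)^(n+1)) * ‖x - y‖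
          ≤ (1/2) * (1 + (1/2:ℝ)^n) * ((1 - 8*sR*aR^n) * ‖x - y‖) := by
            have key : (1/2) * (1 + (1/2:ℝ)^(n+1)) ≤ (1/2) * (1 + (1/2:ℝ)^n) * (1 - 8*sR*aR^n) := by
              have e1 : ((1:ℝ)/2)^(n+1) = (1/2)^n * (1/2) := pow_succ _ _
              rw [e1, sR]
              nlinarith [mul_le_of_le_one_right Ap Ble1]
            calc (1/2) * (1 + (1/2:ℝ)^(n+1)) * ‖x - y‖
                ≤ ((1/2) * (1 + (1/2:ℝ)^n) * (1 - 8*sR*aR^n)) * ‖x - y‖ :=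
                  mul_le_mul_of_nonneg_right key hd
              _ = (1/2) * (1 + (1/2:ℝ)^n) * ((1 - 8*sR*aR^n) * ‖x - y‖) := by ring
        _ ≤ (1/2) * (1 + (1/2:ℝ)^n) * ‖g n x - g n y‖ := by
            apply mul_le_mul_of_nonneg_left step
            nlinarith
        _ ≤ ‖T n (g n x) - T n (g n y)‖ := ih _ _ hgx hgy
        _ = ‖T (n+1) x - T (n+1) y‖ := rfl

lemma T_bound (n : ℕ) : ∀ x : ℂ × ℂ, ‖x‖ ≤ rho n →
    ‖T n x‖ ≤ ‖x‖ + 8*sR^2*(1 - (1/4:ℝ)^n) := by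
  induction n with
  | zero =>
      intro x _
      simp only [T, _root_.id]
      norm_num
  | succ n ih =>
      intro x hx
      have hgx := mem_step hx
      have hxs : ‖x‖ ≤ sR := le_trans hx (rho_le _)
      have h1 := L1 n x hxs
      have B := aR_le_half_pow n
      have Bp := (aR_pow_pos n).le
      have C : aR^n ≤ (1/4:ℝ)^n := by
        apply pow_le_pow_left₀ (by norm_num [aR]) (by norm_num [aR])
      have Cp : (0:ℝ) < (1/4)^n := by positivity
      calc ‖T (n+1) x‖ = ‖T n (g n x)‖ := rfl
        _ ≤ ‖g n x‖ + 8*sR^2*(1 - (1/4:ℝ)^n) := ih _ hgx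
        _ ≤ (‖x‖ + 4*sR^2*aR^n) + 8*sR^2*(1 - (1/4:ℝ)^n) := by
            have : ‖g n x‖ ≤ ‖x‖ + 4*sR^2*aR^n := by
              calc ‖g n x‖ = ‖x + (g n x - x)‖ := by ring_nf
                _ ≤ ‖x‖ + ‖g n x - x‖ := norm_add_le _ _
                _ ≤ ‖x‖ + 4*sR^2*aR^n := by gcongr
            linarith
        _ ≤ ‖x‖ + 8*sR^2*(1 - (1/4:ℝ)^(n+1)) := by
            have e1 : ((1:ℝ)/4)^(n+1) = (1/4)^n * (1/4) := pow_succ _ _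
            rw [e1, sR]
            nlinarith

lemma T_cauchy_step (n : ℕ) (x : ℂ × ℂ) (hx : ‖x‖ ≤ sR/2) :
    dist (T n x) (T (n+1) x) ≤ (8*sR^2) * aR^n := by
  have hx1 : ‖x‖ ≤ rho (n+1) := le_trans hx (half_le_rho _)
  have hx0 : ‖x‖ ≤ rho n := le_trans hx (half_le_rho _)
  have hgx : ‖g n x‖ ≤ rho n := mem_step hx1
  have hxs : ‖x‖ ≤ sR := le_trans hx0 (rho_le _)
  have h1 := L1 n x hxs
  have A := pow_half_le_one n
  have Ap := (pow_half_pos n).le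
  have Bp := (aR_pow_pos n).le
  have hsq : (0:ℝ) ≤ sR^2 := sq_nonneg _
  rw [dist_eq_norm, T_succ]
  calc ‖T n x - T n (g n x)‖ ≤ (2 - (1/2:ℝ)^n) * ‖x - g n x‖ := T_lip_up n _ _ hx0 hgx
    _ ≤ 2 * (4*sR^2*aR^n) := by
        have hn : ‖x - g n x‖ = ‖g n x - x‖ := by rw [norm_sub_rev]
        rw [hn]
        apply mul_le_mul (by nlinarith) h1 (norm_nonneg _) (by norm_num)
    _ = (8*sR^2) * aR^n := by ring

/-- derivative of the second component of `g n` at `x` -/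
def Du (n : ℕ) (x : ℂ × ℂ) : (ℂ × ℂ) →L[ℂ] ℂ :=
  ContinuousLinearMap.snd ℂ ℂ ℂ -
    (a^n) • (x.1 • ContinuousLinearMap.fst ℂ ℂ ℂ + x.1 • ContinuousLinearMap.fst ℂ ℂ ℂ)

def uu (n : ℕ) (x : ℂ × ℂ) : ℂ := x.2 - a^n * (x.1*x.1)

/-- derivative of `g n` at `x` -/
def Dg (n : ℕ) (x : ℂ × ℂ) : (ℂ × ℂ) →L[ℂ] (ℂ × ℂ) :=
  (ContinuousLinearMap.fst ℂ ℂ ℂ -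
    (a^n) • ((uu n x) • (Du n x) + (uu n x) • (Du n x))).prod (Du n x)

lemma hasFDerivAt_g (n : ℕ) (x : ℂ × ℂ) : HasFDerivAt (g n) (Dg n x) x := by
  have hu : HasFDerivAt (fun p : ℂ × ℂ => p.2 - a^n * (p.1*p.1)) (Du n x) x := by
    exact (hasFDerivAt_snd.sub ((hasFDerivAt_fst.mul hasFDerivAt_fst).const_mul (a^n)))
  have h1 : HasFDerivAt
      (fun p : ℂ × ℂ => p.1 - a^n * ((p.2 - a^n * (p.1*p.1)) * (p.2 - a^n * (p.1*p.1))))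
      (ContinuousLinearMap.fst ℂ ℂ ℂ -
        (a^n) • ((uu n x) • (Du n x) + (uu n x) • (Du n x))) x :=
    hasFDerivAt_fst.sub ((hu.mul hu).const_mul (a^n))
  exact h1.prodMk hu

lemma Du_apply (n : ℕ) (x v : ℂ × ℂ) :
    Du n x v = v.2 - a^n * (x.1 * v.1 + x.1 * v.1) := by
  simp [Du, mul_comm]; ring

lemma Dg_apply (n : ℕ) (x v : ℂ × ℂ) :
    Dg n x v = (v.1 - a^n * (uu n x * (Du n x v) + uu n x * (Du n x v)), Du n x v) := by
  simp [Dg, mul_comm]; ring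


lemma uu_bound {n : ℕ} {x : ℂ × ℂ} (hx : ‖x‖ ≤ sR) : ‖uu n x‖ ≤ 2*sR := by
  have h1 : ‖x.1‖ ≤ sR := le_trans (norm_fst_le x) hx
  have h2 : ‖x.2‖ ≤ sR := le_trans (norm_snd_le x) hx
  have hs' : sR ≤ 1 := by norm_num [sR]
  have hs : (0:ℝ) < sR := by norm_num [sR]
  calc ‖uu n x‖ ≤ ‖x.2‖ + ‖a^n * (x.1*x.1)‖ := norm_sub_le _ _
    _ = ‖x.2‖ + aR^n * (‖x.1‖*‖x.1‖) := by rw [norm_mul, norm_mul, norm_a_pow]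
    _ ≤ sR + 1 * (sR*sR) := by
        gcongr <;> first | exact aR_pow_le_one n | exact h1
    _ ≤ 2*sR := by nlinarith

lemma Du_sub_bound {n : ℕ} {x : ℂ × ℂ} (hx : ‖x‖ ≤ sR) (v : ℂ × ℂ) :
    ‖Du n x v - v.2‖ ≤ 2*sR*aR^n * ‖v‖ := by
  have h1 : ‖x.1‖ ≤ sR := le_trans (norm_fst_le x) hx
  have hv1 : ‖v.1‖ ≤ ‖v‖ := norm_fst_le v
  rw [Du_apply]
  have : v.2 - a^n * (x.1 * v.1 + x.1 * v.1) - v.2 = -(a^n * (x.1 * v.1 + x.1 * v.1)) := by ring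
  rw [this, norm_neg, norm_mul, norm_a_pow]
  have hb : ‖x.1 * v.1 + x.1 * v.1‖ ≤ 2*sR*‖v‖ := by
    calc ‖x.1 * v.1 + x.1 * v.1‖ ≤ ‖x.1*v.1‖ + ‖x.1*v.1‖ := norm_add_le _ _
      _ = 2*(‖x.1‖*‖v.1‖) := by rw [norm_mul]; ring
      _ ≤ 2*(sR*‖v‖) := by gcongr <;> first | exact h1 | exact hv1 | norm_num [sR]
      _ = 2*sR*‖v‖ := by ring
  calc aR^n * ‖x.1 * v.1 + x.1 * v.1‖ ≤ aR^n * (2*sR*‖v‖) :=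
        mul_le_mul_of_nonneg_left hb (aR_pow_pos n).le
    _ = 2*sR*aR^n * ‖v‖ := by ring

lemma Du_bound {n : ℕ} {x : ℂ × ℂ} (hx : ‖x‖ ≤ sR) (v : ℂ × ℂ) :
    ‖Du n x v‖ ≤ (1 + 2*sR*aR^n) * ‖v‖ := by
  have hv2 : ‖v.2‖ ≤ ‖v‖ := norm_snd_le v
  calc ‖Du n x v‖ = ‖v.2 + (Du n x v - v.2)‖ := by ring_nf
    _ ≤ ‖v.2‖ + ‖Du n x v - v.2‖ := norm_add_le _ _
    _ ≤ ‖v‖ + 2*sR*aR^n * ‖v‖ := by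
        have := Du_sub_bound (n := n) hx v
        gcongr
    _ = (1 + 2*sR*aR^n) * ‖v‖ := by ring

/-- B1 : `‖Dg n x - id‖ ≤ 8 sR aR^n` on the `sR`-ball. -/
lemma Dg_sub_id_bound {n : ℕ} {x : ℂ × ℂ} (hx : ‖x‖ ≤ sR) :
    ‖Dg n x - ContinuousLinearMap.id ℂ (ℂ × ℂ)‖ ≤ 8*sR*aR^n := by
  have hs : (0:ℝ) < sR := by norm_num [sR]
  have hs' : sR ≤ 1 := by norm_num [sR]
  have haj := aR_pow_pos n
  have haj1 := aR_pow_le_one n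
  apply ContinuousLinearMap.opNorm_le_bound
  · positivity
  intro v
  have hv : (0:ℝ) ≤ ‖v‖ := norm_nonneg v
  have happ : (Dg n x - ContinuousLinearMap.id ℂ (ℂ × ℂ)) v =
      (-(a^n * (uu n x * (Du n x v) + uu n x * (Du n x v))), Du n x v - v.2) := by
    rw [ContinuousLinearMap.sub_apply, ContinuousLinearMap.id_apply, Dg_apply, Prod.ext_iff]
    constructor
    · simp only [Prod.fst_sub]; simp; try ring
    · simp only [Prod.snd_sub]
  rw [happ, Prod.norm_def]
  have hDu := Du_bound (n := n) hx v
  have hDus := Du_sub_bound (n := n) hx v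
  have huu := uu_bound (n := n) hx
  have hDun : (0:ℝ) ≤ ‖Du n x v‖ := norm_nonneg _
  apply max_le
  · rw [norm_neg, norm_mul, norm_a_pow]
    have hfac : ‖uu n x * (Du n x v) + uu n x * (Du n x v)‖ ≤ 2*(2*sR)*((1 + 2*sR*aR^n) * ‖v‖) := by
      calc ‖uu n x * (Du n x v) + uu n x * (Du n x v)‖ ≤ ‖uu n x * (Du n x v)‖ + ‖uu n x * (Du n x v)‖ :=
            norm_add_le _ _
        _ = 2*(‖uu n x‖ * ‖Du n x v‖) := by rw [norm_mul]; ring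
        _ ≤ 2*((2*sR) * ((1 + 2*sR*aR^n) * ‖v‖)) := by gcongr
        _ = 2*(2*sR)*((1 + 2*sR*aR^n) * ‖v‖) := by ring
    calc aR^n * ‖uu n x * (Du n x v) + uu n x * (Du n x v)‖
        ≤ aR^n * (2*(2*sR)*((1 + 2*sR*aR^n) * ‖v‖)) := by gcongr
      _ ≤ 8*sR*aR^n * ‖v‖ := by
          have hs2 : sR ≤ 1/2 := by norm_num [sR]
          have hkey : 1 + 2*sR*aR^n ≤ 2 := by
            nlinarith [mul_le_of_le_one_right hs.le haj1]
          nlinarith [mul_nonneg (mul_nonneg hs.le haj.le) hv, mul_nonneg haj.le hv,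
            mul_nonneg (mul_nonneg hs.le haj.le) (mul_nonneg haj.le hv)]
  · calc ‖Du n x v - v.2‖ ≤ 2*sR*aR^n * ‖v‖ := hDus
      _ ≤ 8*sR*aR^n * ‖v‖ := by nlinarith [mul_nonneg (mul_nonneg hs.le haj.le) hv]

lemma uu_lip {n : ℕ} {x y : ℂ × ℂ} (hx : ‖x‖ ≤ sR) (hy : ‖y‖ ≤ sR) :
    ‖uu n x - uu n y‖ ≤ (1 + 2*sR*aR^n) * ‖x - y‖ := by
  have hx1 : ‖x.1‖ ≤ sR := le_trans (norm_fst_le x) hx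
  have hy1 : ‖y.1‖ ≤ sR := le_trans (norm_fst_le y) hy
  have hd1 : ‖x.1 - y.1‖ ≤ ‖x - y‖ := norm_fst_le (x - y)
  have hd2 : ‖x.2 - y.2‖ ≤ ‖x - y‖ := norm_snd_le (x - y)
  have : uu n x - uu n y = (x.2 - y.2) - a^n * ((x.1 + y.1) * (x.1 - y.1)) := by
    rw [uu, uu]; ring
  rw [this]
  have hxy1 : ‖x.1 + y.1‖ ≤ sR + sR := le_trans (norm_add_le _ _) (by linarith)
  calc ‖(x.2 - y.2) - a^n * ((x.1 + y.1) * (x.1 - y.1))‖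
      ≤ ‖x.2 - y.2‖ + ‖a^n * ((x.1 + y.1) * (x.1 - y.1))‖ := norm_sub_le _ _
    _ = ‖x.2 - y.2‖ + aR^n * (‖x.1 + y.1‖ * ‖x.1 - y.1‖) := by
        rw [norm_mul, norm_mul, norm_a_pow]
    _ ≤ ‖x - y‖ + aR^n * ((sR + sR) * ‖x - y‖) := by
        gcongr <;> first | exact hd2 | exact hd1 | exact hxy1 | exact (aR_pow_pos n).le | norm_num [sR]
    _ = (1 + 2*sR*aR^n) * ‖x - y‖ := by ring

lemma Du_lip {n : ℕ} (x y : ℂ × ℂ) (v : ℂ × ℂ) :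
    ‖Du n x v - Du n y v‖ ≤ 2*aR^n * ‖x - y‖ * ‖v‖ := by
  have hd1 : ‖x.1 - y.1‖ ≤ ‖x - y‖ := norm_fst_le (x - y)
  have hv1 : ‖v.1‖ ≤ ‖v‖ := norm_fst_le v
  have : Du n x v - Du n y v = -(a^n * (((x.1 - y.1) * v.1) + ((x.1 - y.1) * v.1))) := by
    rw [Du_apply, Du_apply]; ring
  rw [this, norm_neg, norm_mul, norm_a_pow]
  calc aR^n * ‖(x.1 - y.1) * v.1 + (x.1 - y.1) * v.1‖
      ≤ aR^n * (2 * (‖x.1 - y.1‖ * ‖v.1‖)) := by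
        refine mul_le_mul_of_nonneg_left ?_ (aR_pow_pos n).le
        refine le_trans (norm_add_le _ _) ?_
        rw [norm_mul]; linarith [mul_nonneg (norm_nonneg (x.1-y.1)) (norm_nonneg v.1)]
    _ ≤ aR^n * (2 * (‖x - y‖ * ‖v‖)) := by
        refine mul_le_mul_of_nonneg_left ?_ (aR_pow_pos n).le
        have := mul_le_mul hd1 hv1 (norm_nonneg _) (norm_nonneg _)
        linarith
    _ = 2*aR^n * ‖x - y‖ * ‖v‖ := by ring

/-- B2 : Lipschitz estimate for `x ↦ Dg n x` on the `sR`-ball. -/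
lemma Dg_lip {n : ℕ} {x y : ℂ × ℂ} (hx : ‖x‖ ≤ sR) (hy : ‖y‖ ≤ sR) :
    ‖Dg n x - Dg n y‖ ≤ (5/2)*aR^n * ‖x - y‖ := by
  have hs : (0:ℝ) < sR := by norm_num [sR]
  have hs' : sR ≤ 1/512 := by norm_num [sR]
  have haj := aR_pow_pos n
  have haj1 := aR_pow_le_one n
  have hdn : (0:ℝ) ≤ ‖x - y‖ := norm_nonneg _
  apply ContinuousLinearMap.opNorm_le_bound
  · positivity
  intro v
  have hv : (0:ℝ) ≤ ‖v‖ := norm_nonneg v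
  have happ : (Dg n x - Dg n y) v =
      (-(a^n * ((uu n x * (Du n x v) - uu n y * (Du n y v)) +
                (uu n x * (Du n x v) - uu n y * (Du n y v)))),
       Du n x v - Du n y v) := by
    rw [ContinuousLinearMap.sub_apply, Dg_apply, Dg_apply, Prod.ext_iff]
    constructor <;> (simp only [Prod.fst_sub, Prod.snd_sub]; try simp; try ring)
  rw [happ, Prod.norm_def]
  have hDux := Du_bound (n := n) hx v
  have hDuy := Du_bound (n := n) hy v
  have hDul := Du_lip (n := n) x y v
  have huux := uu_bound (n := n) hx
  have huuy := uu_bound (n := n) hy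
  have huul := uu_lip (n := n) hx hy
  apply max_le
  · rw [norm_neg, norm_mul, norm_a_pow]
    -- key product difference bound
    have hkey : ‖uu n x * (Du n x v) - uu n y * (Du n y v)‖ ≤
        ((1 + 2*sR*aR^n) * ‖x - y‖) * ((1 + 2*sR*aR^n) * ‖v‖) +
        (2*sR) * (2*aR^n * ‖x - y‖ * ‖v‖) := by
      have e : uu n x * (Du n x v) - uu n y * (Du n y v) =
          (uu n x - uu n y) * (Du n x v) + uu n y * (Du n x v - Du n y v) := by ring
      rw [e]
      refine le_trans (norm_add_le _ _) ?_
      rw [norm_mul, norm_mul]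
      gcongr <;> try exact norm_nonneg _
    have hsum : ‖(uu n x * (Du n x v) - uu n y * (Du n y v)) +
                (uu n x * (Du n x v) - uu n y * (Du n y v))‖ ≤
        2 * (((1 + 2*sR*aR^n) * ‖x - y‖) * ((1 + 2*sR*aR^n) * ‖v‖) +
        (2*sR) * (2*aR^n * ‖x - y‖ * ‖v‖)) := by
      refine le_trans (norm_add_le _ _) ?_
      linarith
    calc aR^n * ‖(uu n x * (Du n x v) - uu n y * (Du n y v)) +
                (uu n x * (Du n x v) - uu n y * (Du n y v))‖
        ≤ aR^n * (2 * (((1 + 2*sR*aR^n) * ‖x - y‖) * ((1 + 2*sR*aR^n) * ‖v‖) +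
            (2*sR) * (2*aR^n * ‖x - y‖ * ‖v‖))) :=
          mul_le_mul_of_nonneg_left hsum haj.le
      _ ≤ (5/2)*aR^n * ‖x - y‖ * ‖v‖ := by
          have h1 : sR*aR^n ≤ sR := mul_le_of_le_one_right hs.le haj1
          have hfac : (1 + 2*sR*aR^n) ≤ 257/256 := by
            rw [sR] at h1 ⊢; nlinarith
          have hD : (0:ℝ) ≤ ‖x - y‖ * ‖v‖ := mul_nonneg hdn hv
          have expand : (2 : ℝ) * (((1 + 2*sR*aR^n)) * ((1 + 2*sR*aR^n)) + (2*sR) * (2*aR^n)) ≤ 5/2 := by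
            rw [sR] at h1 ⊢
            nlinarith [haj1, haj.le]
          nlinarith [mul_nonneg haj.le hD, haj.le, hD,
            mul_le_mul_of_nonneg_right expand (mul_nonneg haj.le hD)]
  · calc ‖Du n x v - Du n y v‖ ≤ 2*aR^n * ‖x - y‖ * ‖v‖ := hDul
      _ ≤ (5/2)*aR^n * ‖x - y‖ * ‖v‖ := by
          nlinarith [mul_nonneg (mul_nonneg haj.le hdn) hv]



def DT : ℕ → (ℂ × ℂ) → ((ℂ × ℂ) →L[ℂ] (ℂ × ℂ))
  | 0 => fun _ => ContinuousLinearMap.id ℂ (ℂ × ℂ)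
  | (n+1) => fun x => (DT n (g n x)).comp (Dg n x)

lemma hasFDerivAt_T (n : ℕ) (x : ℂ × ℂ) : HasFDerivAt (T n) (DT n x) x := by
  induction n generalizing x with
  | zero => exact hasFDerivAt_id x
  | succ n ih =>
      have := (ih (g n x)).comp x (hasFDerivAt_g n x)
      exact this

lemma Dg_norm {n : ℕ} {x : ℂ × ℂ} (hx : ‖x‖ ≤ sR) : ‖Dg n x‖ ≤ 1 + 8*sR*aR^n := by
  have h := Dg_sub_id_bound (n := n) hx
  calc ‖Dg n x‖ = ‖(Dg n x - ContinuousLinearMap.id ℂ (ℂ × ℂ)) + ContinuousLinearMap.id ℂ (ℂ × ℂ)‖ := by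
        congr 1; abel
    _ ≤ ‖Dg n x - ContinuousLinearMap.id ℂ (ℂ × ℂ)‖ + ‖ContinuousLinearMap.id ℂ (ℂ × ℂ)‖ :=
        norm_add_le _ _
    _ ≤ 8*sR*aR^n + 1 := by
        have := ContinuousLinearMap.norm_id_le (E := ℂ × ℂ) (𝕜 := ℂ)
        gcongr
    _ = 1 + 8*sR*aR^n := by ring

lemma DT_norm (n : ℕ) : ∀ x : ℂ × ℂ, ‖x‖ ≤ rho n → ‖DT n x‖ ≤ 2 - (1/2:ℝ)^n := by
  induction n with
  | zero =>
      intro x _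
      have : ‖DT 0 x‖ ≤ 1 := ContinuousLinearMap.norm_id_le
      have e : ((1:ℝ)/2)^0 = 1 := pow_zero _
      rw [e]
      linarith
  | succ n ih =>
      intro x hx
      have hgx := mem_step hx
      have hxs : ‖x‖ ≤ sR := le_trans hx (rho_le _)
      have A := pow_half_le_one n
      have Ap := (pow_half_pos n).le
      have B := aR_le_half_pow n
      have Bp := (aR_pow_pos n).le
      calc ‖DT (n+1) x‖ = ‖(DT n (g n x)).comp (Dg n x)‖ := rfl
        _ ≤ ‖DT n (g n x)‖ * ‖Dg n x‖ := ContinuousLinearMap.opNorm_comp_le _ _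
        _ ≤ (2 - (1/2:ℝ)^n) * (1 + 8*sR*aR^n) := by
            apply mul_le_mul (ih _ hgx) (Dg_norm hxs) (norm_nonneg _) (by nlinarith)
        _ ≤ 2 - (1/2:ℝ)^(n+1) := by
            have e1 : ((1:ℝ)/2)^(n+1) = (1/2)^n * (1/2) := pow_succ _ _
            rw [e1, sR]
            nlinarith [mul_nonneg Ap Bp]

lemma DTlip_arith {A B C d G : ℝ} (hA0 : 0 ≤ A) (hB0 : 0 ≤ B) (hB1 : B ≤ 1)
    (hBC : B ≤ C) (hC0 : 0 ≤ C) (hC1 : C ≤ 1) (hd : 0 ≤ d) (hG0 : 0 ≤ G)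
    (hGb : G ≤ (1 + 8*(1/512)*B) * d) :
    (6*(1 - C) * G) * (1 + 8*(1/512)*B) + (2 - A) * ((5/2)*B * d) ≤ 6*(1 - C*(1/16)) * d := by
  have h6 : (0:ℝ) ≤ 6*(1-C)*(1 + 8*(1/512)*B) := by nlinarith
  have hsub : 0 ≤ (1 + 8*(1/512)*B)*d - G := by linarith
  have k1 : (6*(1 - C) * G) * (1 + 8*(1/512)*B) ≤
      (6*(1-C)*(1 + 8*(1/512)*B)*(1 + 8*(1/512)*B))*d := by
    nlinarith [mul_nonneg h6 hsub]
  have k2 : 6*(1-C)*(1 + 8*(1/512)*B)*(1 + 8*(1/512)*B) + (2 - A)*((5/2)*B) ≤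
      6*(1 - C*(1/16)) := by
    nlinarith [mul_nonneg hA0 hB0, mul_nonneg hB0 hC0, sq_nonneg B,
      mul_le_of_le_one_right hB0 hB1, mul_le_of_le_one_right hC0 hB1]
  nlinarith [mul_le_mul_of_nonneg_right k2 hd]

lemma DTcs_arith {A B C : ℝ} (hA0 : 0 ≤ A) (hB0 : 0 ≤ B) (hC0 : 0 ≤ C) :
    (2 - A) * (8*(1/512)*B) + 6*(1 - C) * (4*(1/512)^2*B) ≤ (1/16) * B := by
  nlinarith [mul_nonneg hA0 hB0, mul_nonneg hC0 hB0]

lemma DT_lip (n : ℕ) : ∀ x y : ℂ × ℂ, ‖x‖ ≤ rho n → ‖y‖ ≤ rho n →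
    ‖DT n x - DT n y‖ ≤ 6*(1 - (1/16:ℝ)^n) * ‖x - y‖ := by
  induction n with
  | zero =>
      intro x y _ _
      simp [DT]
  | succ n ih =>
      intro x y hx hy
      have hgx := mem_step hx
      have hgy := mem_step hy
      have hxs : ‖x‖ ≤ sR := le_trans hx (rho_le _)
      have hys : ‖y‖ ≤ sR := le_trans hy (rho_le _)
      have hd := norm_nonneg (x - y)
      have Bp := (aR_pow_pos n).le
      have hBC : aR^n ≤ ((1:ℝ)/16)^n :=
        pow_le_pow_left₀ (by norm_num [aR]) (by norm_num [aR]) n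
      have Cp : (0:ℝ) < (1/16)^n := by positivity
      have C1 : ((1:ℝ)/16)^n ≤ 1 := pow_le_one₀ (by norm_num) (by norm_num)
      have hdec : DT (n+1) x - DT (n+1) y =
          ((DT n (g n x) - DT n (g n y)).comp (Dg n x)) +
          ((DT n (g n y)).comp (Dg n x - Dg n y)) := by
        show (DT n (g n x)).comp (Dg n x) - (DT n (g n y)).comp (Dg n y) = _
        rw [ContinuousLinearMap.sub_comp, ContinuousLinearMap.comp_sub]
        abel
      have hglip := g_lip_up (n := n) hxs hys
      have ihxy := ih _ _ hgx hgy
      have dglip := Dg_lip (n := n) hxs hys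
      have hDTn := DT_norm n (g n y) hgy
      have hDgn := Dg_norm (n := n) hxs
      have hgd := norm_nonneg (g n x - g n y)
      have hsR : sR = 1/512 := rfl
      rw [hsR] at hglip hDgn
      have A0 : (0:ℝ) ≤ ((1:ℝ)/2)^n := (pow_half_pos n).le
      have hB1 : (aR:ℝ)^n ≤ 1 := aR_pow_le_one n
      have s1 : ‖(DT n (g n x) - DT n (g n y)).comp (Dg n x)‖ ≤
          (6*(1 - ((1:ℝ)/16)^n) * ‖g n x - g n y‖) * (1 + 8*(1/512)*(aR^n)) := by
        refine le_trans (ContinuousLinearMap.opNorm_comp_le _ _) ?_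
        refine mul_le_mul ihxy hDgn (norm_nonneg _) ?_
        have : (0:ℝ) ≤ 6*(1 - ((1:ℝ)/16)^n) := by nlinarith
        exact mul_nonneg this hgd
      have s2 : ‖(DT n (g n y)).comp (Dg n x - Dg n y)‖ ≤
          (2 - ((1:ℝ)/2)^n) * ((5/2)*(aR^n) * ‖x - y‖) := by
        refine le_trans (ContinuousLinearMap.opNorm_comp_le _ _) ?_
        refine mul_le_mul hDTn dglip (norm_nonneg _) ?_
        linarith [pow_half_le_one n]
      have key := DTlip_arith (A := ((1:ℝ)/2)^n) (B := (aR:ℝ)^n) (C := ((1:ℝ)/16)^n)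
        (d := ‖x - y‖) (G := ‖g n x - g n y‖)
        A0 Bp hB1 hBC Cp.le C1 hd hgd hglip
      have e1 : ((1:ℝ)/16)^(n+1) = ((1:ℝ)/16)^n * (1/16) := pow_succ _ _
      rw [hdec, e1]
      calc ‖((DT n (g n x) - DT n (g n y)).comp (Dg n x)) +
            ((DT n (g n y)).comp (Dg n x - Dg n y))‖
          ≤ ‖(DT n (g n x) - DT n (g n y)).comp (Dg n x)‖ +
            ‖(DT n (g n y)).comp (Dg n x - Dg n y)‖ := norm_add_le _ _
        _ ≤ (6*(1 - ((1:ℝ)/16)^n) * ‖g n x - g n y‖) * (1 + 8*(1/512)*(aR^n)) +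
            (2 - ((1:ℝ)/2)^n) * ((5/2)*(aR^n) * ‖x - y‖) := by linarith
        _ ≤ 6*(1 - ((1:ℝ)/16)^n*(1/16)) * ‖x - y‖ := key

lemma DT_cauchy_step (n : ℕ) (x : ℂ × ℂ) (hx : ‖x‖ ≤ sR/2) :
    ‖DT (n+1) x - DT n x‖ ≤ (1/16) * aR^n := by
  have hx1 : ‖x‖ ≤ rho (n+1) := le_trans hx (half_le_rho _)
  have hx0 : ‖x‖ ≤ rho n := le_trans hx (half_le_rho _)
  have hgx : ‖g n x‖ ≤ rho n := mem_step hx1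
  have hxs : ‖x‖ ≤ sR := le_trans hx0 (rho_le _)
  have hdec : DT (n+1) x - DT n x =
      (DT n (g n x)).comp (Dg n x - ContinuousLinearMap.id ℂ (ℂ × ℂ)) +
      (DT n (g n x) - DT n x) := by
    show (DT n (g n x)).comp (Dg n x) - DT n x = _
    rw [ContinuousLinearMap.comp_sub, ContinuousLinearMap.comp_id]
    abel
  have h1 := DT_norm n (g n x) hgx
  have h2 := Dg_sub_id_bound (n := n) hxs
  have h3 := DT_lip n (g n x) x hgx hx0
  have h4 := L1 n x hxs
  have A := pow_half_le_one n
  have Ap := (pow_half_pos n).le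
  have Bp := (aR_pow_pos n).le
  have C1 : ((1:ℝ)/16)^n ≤ 1 := pow_le_one₀ (by norm_num) (by norm_num)
  have Cp : (0:ℝ) < (1/16)^n := by positivity
  rw [hdec]
  have hna : ‖g n x - x‖ ≤ 4*sR^2*aR^n := h4
  have s1 : ‖(DT n (g n x)).comp (Dg n x - ContinuousLinearMap.id ℂ (ℂ × ℂ))‖ ≤
      (2 - (1/2:ℝ)^n) * (8*sR*aR^n) := by
    refine le_trans (ContinuousLinearMap.opNorm_comp_le _ _) ?_
    refine mul_le_mul h1 h2 (norm_nonneg _) ?_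
    nlinarith
  have s2 : ‖DT n (g n x) - DT n x‖ ≤ 6*(1 - (1/16:ℝ)^n) * (4*sR^2*aR^n) := by
    refine le_trans h3 ?_
    have hco : (0:ℝ) ≤ 6*(1 - (1/16:ℝ)^n) := by nlinarith
    exact mul_le_mul_of_nonneg_left hna hco
  have hBC : aR^n ≤ ((1:ℝ)/16)^n :=
    pow_le_pow_left₀ (by norm_num [aR]) (by norm_num [aR]) n
  have key := DTcs_arith (A := ((1:ℝ)/2)^n) (B := (aR:ℝ)^n) (C := ((1:ℝ)/16)^n)
    Ap Bp Cp.le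
  have hsR : sR = 1/512 := rfl
  rw [hsR] at s1 s2
  refine le_trans (norm_add_le _ _) ?_
  linarith

lemma T_cont (n : ℕ) : Continuous (T n) :=
  continuous_iff_continuousAt.mpr fun x => (hasFDerivAt_T n x).differentiableAt.continuousAt

lemma tele' {X : Type*} [PseudoMetricSpace X] (u : ℕ → X) (C : ℝ) (hC : 0 ≤ C)
    (h : ∀ k, dist (u k) (u (k+1)) ≤ C * aR^k) :
    ∀ N n, N ≤ n → dist (u N) (u n) ≤ 2*C*aR^N - 2*C*aR^n := by
  intro N n hNn
  induction n, hNn using Nat.le_induction with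
  | base => simp
  | succ n hNn ih =>
      have h2 := h n
      have e : aR^(n+1) = aR^n * aR := pow_succ _ _
      have haRn := (aR_pow_pos n).le
      calc dist (u N) (u (n+1)) ≤ dist (u N) (u n) + dist (u n) (u (n+1)) := dist_triangle _ _ _
        _ ≤ (2*C*aR^N - 2*C*aR^n) + C * aR^n := by linarith
        _ ≤ 2*C*aR^N - 2*C*aR^(n+1) := by
            have ha : aR = 1/32 := rfl
            rw [e, ha]
            have h0 : (0:ℝ) ≤ C * ((1:ℝ)/32)^n := by
              have := mul_nonneg hC haRn
              rw [ha] at this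
              exact this
            nlinarith

lemma tele {X : Type*} [PseudoMetricSpace X] (u : ℕ → X) (C : ℝ) (hC : 0 ≤ C)
    (h : ∀ k, dist (u k) (u (k+1)) ≤ C * aR^k) :
    ∀ N n, N ≤ n → dist (u N) (u n) ≤ 2*C*aR^N := by
  intro N n hNn
  have := tele' u C hC h N n hNn
  have h2 : (0:ℝ) ≤ 2*C*aR^n := by
    have := (aR_pow_pos n).le
    positivity
  linarith

/-- the limiting map -/
def Phi (p : ℂ × ℂ) : ℂ × ℂ := limUnder atTop (fun n => T n p)

lemma cauchy_small {q : ℂ × ℂ} (hq : ‖q‖ ≤ sR/2) : CauchySeq (fun n => T n q) := by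
  apply cauchySeq_of_le_geometric (r := aR) (C := 8*sR^2) (by norm_num [aR])
  intro n
  exact T_cauchy_step n q hq

lemma tendsto_small {q : ℂ × ℂ} (hq : ‖q‖ ≤ sR/2) :
    Tendsto (fun n => T n q) atTop (𝓝 (Phi q)) :=
  (cauchy_small hq).tendsto_limUnder

lemma smul_norm_pow (m : ℕ) (p : ℂ × ℂ) : ‖(a^m) • p‖ = aR^m * ‖p‖ := by
  rw [norm_smul, norm_a_pow]

lemma exists_m (p : ℂ × ℂ) (ε : ℝ) (hε : 0 < ε) : ∃ m : ℕ, ‖(a^m) • p‖ ≤ ε := by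
  have h1 : Tendsto (fun m : ℕ => aR^m * ‖p‖) atTop (𝓝 0) := by
    have := tendsto_pow_atTop_nhds_zero_of_lt_one aR_pos.le (by norm_num [aR])
    simpa using this.mul_const ‖p‖
  have h2 := (h1.eventually (eventually_le_nhds hε)).exists
  obtain ⟨m, hm⟩ := h2
  exact ⟨m, by rw [smul_norm_pow]; exact hm⟩

lemma tendsto_global (p : ℂ × ℂ) (m : ℕ) (hm : ‖(a^m) • p‖ ≤ sR/2) :
    Tendsto (fun n => T n p) atTop (𝓝 (T m ((a^m)⁻¹ • Phi ((a^m) • p)))) := by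
  have key : ∀ k, T (k + m) p = T m ((a^m)⁻¹ • T k ((a^m) • p)) := by
    intro k
    rw [Nat.add_comm k m]
    exact T_shift m k p
  have inner : Tendsto (fun k => T m ((a^m)⁻¹ • T k ((a^m) • p))) atTop
      (𝓝 (T m ((a^m)⁻¹ • Phi ((a^m) • p)))) := by
    apply ((T_cont m).tendsto _).comp
    exact (((continuous_const_smul ((a^m)⁻¹)).tendsto _).comp (tendsto_small hm))
  have : Tendsto (fun k => T (k + m) p) atTop (𝓝 (T m ((a^m)⁻¹ • Phi ((a^m) • p)))) := by
    simpa [key] using inner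
  exact (tendsto_add_atTop_iff_nat m).mp this

lemma Phi_tendsto (p : ℂ × ℂ) : Tendsto (fun n => T n p) atTop (𝓝 (Phi p)) := by
  obtain ⟨m, hm⟩ := exists_m p (sR/2) (by norm_num [sR])
  have h := tendsto_global p m hm
  rw [Phi, h.limUnder_eq]
  exact h

lemma Phi_rep (p : ℂ × ℂ) (m : ℕ) (hm : ‖(a^m) • p‖ ≤ sR/2) :
    Phi p = T m ((a^m)⁻¹ • Phi ((a^m) • p)) :=
  tendsto_nhds_unique (Phi_tendsto p) (tendsto_global p m hm)

lemma Phi_zero : Phi 0 = 0 := by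
  have : Tendsto (fun n => T n (0 : ℂ × ℂ)) atTop (𝓝 0) := by
    simp only [T_at_zero]
    exact tendsto_const_nhds
  exact tendsto_nhds_unique (Phi_tendsto 0) this

lemma F_cont : Continuous F := by
  unfold F
  fun_prop

lemma F_Phi (p : ℂ × ℂ) : F (Phi p) = Phi (a • p) := by
  have h1 : Tendsto (fun n => F (T (n+1) p)) atTop (𝓝 (F (Phi p))) := by
    apply (F_cont.tendsto _).comp
    exact (Phi_tendsto p).comp (tendsto_add_atTop_nat 1)
  have h2 : Tendsto (fun n => T n (a • p)) atTop (𝓝 (Phi (a • p))) := Phi_tendsto _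
  have e : (fun n => F (T (n+1) p)) = (fun n => T n (a • p)) := by
    funext n; exact F_T n p
  rw [e] at h1
  exact tendsto_nhds_unique h1 h2

lemma Phi_low {x y : ℂ × ℂ} (hx : ‖x‖ ≤ sR/2) (hy : ‖y‖ ≤ sR/2) :
    (1/2) * ‖x - y‖ ≤ ‖Phi x - Phi y‖ := by
  have hlim : Tendsto (fun n => ‖T n x - T n y‖) atTop (𝓝 ‖Phi x - Phi y‖) :=
    ((Phi_tendsto x).sub (Phi_tendsto y)).norm
  apply ge_of_tendsto hlim
  filter_upwards with n
  have h := T_lip_low n x y (le_trans hx (half_le_rho n)) (le_trans hy (half_le_rho n))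
  have h2 : (0:ℝ) ≤ (1/2)^n := by positivity
  nlinarith [norm_nonneg (x - y)]

lemma smul_inj (m : ℕ) : Function.Injective (fun q : ℂ × ℂ => (a^m) • q) :=
  smul_right_injective _ (pow_ne_zero m a_ne)

lemma Phi_inj : Function.Injective Phi := by
  intro p q h
  obtain ⟨m1, hm1⟩ := exists_m p (sR/2) (by norm_num [sR])
  obtain ⟨m2, hm2⟩ := exists_m q (sR/2) (by norm_num [sR])
  set m := max m1 m2 with hm
  have hp : ‖(a^m) • p‖ ≤ sR/2 := by
    have : (a^m) • p = (a^(m - m1)) • ((a^m1) • p) := by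
      rw [smul_smul, ← pow_add]
      congr 2
      omega
    rw [this, smul_norm_pow]
    calc aR^(m - m1) * ‖(a^m1) • p‖ ≤ 1 * (sR/2) := by
          apply mul_le_mul (pow_le_one₀ aR_pos.le (by norm_num [aR])) hm1 (norm_nonneg _) zero_le_one
      _ = sR/2 := one_mul _
  have hq : ‖(a^m) • q‖ ≤ sR/2 := by
    have : (a^m) • q = (a^(m - m2)) • ((a^m2) • q) := by
      rw [smul_smul, ← pow_add]
      congr 2
      omega
    rw [this, smul_norm_pow]
    calc aR^(m - m2) * ‖(a^m2) • q‖ ≤ 1 * (sR/2) := by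
          apply mul_le_mul (pow_le_one₀ aR_pos.le (by norm_num [aR])) hm2 (norm_nonneg _) zero_le_one
      _ = sR/2 := one_mul _
  have e1 := Phi_rep p m hp
  have e2 := Phi_rep q m hq
  rw [e1, e2] at h
  have h3 := T_inj m h
  have h4 : Phi ((a^m) • p) = Phi ((a^m) • q) := by
    have := congrArg (fun z => (a^m) • z) h3
    simpa [smul_smul, mul_inv_cancel₀ (pow_ne_zero m a_ne)] using this
  have h5 := Phi_low hp hq
  rw [h4] at h5
  simp only [sub_self, norm_zero] at h5
  have h6 : ‖(a^m) • p - (a^m) • q‖ = 0 := by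
    have := norm_nonneg ((a^m) • p - (a^m) • q)
    linarith
  have h7 : (a^m) • p = (a^m) • q := sub_eq_zero.mp (norm_eq_zero.mp h6)
  exact smul_inj m h7

/-- limit of the derivatives -/
def Phi' (x : ℂ × ℂ) : (ℂ × ℂ) →L[ℂ] (ℂ × ℂ) := limUnder atTop (fun n => DT n x)

lemma DT_step_dist {x : ℂ × ℂ} (hx : ‖x‖ ≤ sR/2) (n : ℕ) :
    dist (DT n x) (DT (n+1) x) ≤ (1/16) * aR^n := by
  rw [dist_eq_norm, norm_sub_rev]
  exact DT_cauchy_step n x hx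

lemma DT_cauchySeq {x : ℂ × ℂ} (hx : ‖x‖ ≤ sR/2) : CauchySeq (fun n => DT n x) :=
  cauchySeq_of_le_geometric (r := aR) (C := 1/16) (by norm_num [aR]) (DT_step_dist hx)

lemma DT_tendsto {x : ℂ × ℂ} (hx : ‖x‖ ≤ sR/2) :
    Tendsto (fun n => DT n x) atTop (𝓝 (Phi' x)) :=
  (DT_cauchySeq hx).tendsto_limUnder

lemma DT_dist_lim {x : ℂ × ℂ} (hx : ‖x‖ ≤ sR/2) (N : ℕ) :
    dist (DT N x) (Phi' x) ≤ 2*(1/16)*aR^N := by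
  have hlim : Tendsto (fun n => dist (DT N x) (DT n x)) atTop
      (𝓝 (dist (DT N x) (Phi' x))) :=
    tendsto_const_nhds.dist (DT_tendsto hx)
  apply le_of_tendsto hlim
  filter_upwards [eventually_ge_atTop N] with n hn
  exact tele (fun n => DT n x) (1/16) (by norm_num) (DT_step_dist hx) N n hn

lemma DT_uniform : TendstoUniformlyOn (fun n x => DT n x) Phi' atTop
    (Metric.ball 0 (sR/2)) := by
  rw [Metric.tendstoUniformlyOn_iff]
  intro ε hε
  obtain ⟨N, hN⟩ : ∃ N : ℕ, 2*(1/16)*aR^N < ε := by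
    have h1 : Tendsto (fun N : ℕ => 2*(1/16)*aR^N) atTop (𝓝 0) := by
      have := tendsto_pow_atTop_nhds_zero_of_lt_one aR_pos.le (by norm_num [aR])
      simpa using this.const_mul (2*(1/16) : ℝ)
    exact (h1.eventually (eventually_lt_nhds hε)).exists
  filter_upwards [eventually_ge_atTop N] with n hn x hx
  have hx' : ‖x‖ ≤ sR/2 := by
    rw [Metric.mem_ball, dist_zero_right] at hx
    exact hx.le
  have h2 := DT_dist_lim hx' n
  have h3 : aR^n ≤ aR^N := pow_le_pow_of_le_one aR_pos.le (by norm_num [aR]) hn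
  rw [dist_comm]
  calc dist (DT n x) (Phi' x) ≤ 2*(1/16)*aR^n := h2
    _ ≤ 2*(1/16)*aR^N := by nlinarith
    _ < ε := hN

lemma Phi_hasFDerivAt {x : ℂ × ℂ} (hx : x ∈ Metric.ball (0 : ℂ × ℂ) (sR/2)) :
    HasFDerivAt Phi (Phi' x) x := by
  exact hasFDerivAt_of_tendstoUniformlyOn Metric.isOpen_ball DT_uniform
    (fun n y _ => hasFDerivAt_T n y) (fun y _ => Phi_tendsto y) hx

lemma Phi_diff : Differentiable ℂ Phi := by
  intro p
  obtain ⟨m, hm⟩ := exists_m p (sR/4) (by norm_num [sR])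
  have hball : ‖(a^m) • p‖ < sR/2 := lt_of_le_of_lt hm (by norm_num [sR])
  -- the local representation
  have hopen : IsOpen {x : ℂ × ℂ | ‖(a^m) • x‖ < sR/2} := by
    have : Continuous fun x : ℂ × ℂ => ‖(a^m) • x‖ :=
      (continuous_const_smul _).norm
    exact isOpen_lt this continuous_const
  have hev : Phi =ᶠ[𝓝 p] (fun x => T m ((a^m)⁻¹ • Phi ((a^m) • x))) := by
    filter_upwards [hopen.mem_nhds hball] with x hx
    exact Phi_rep x m (le_of_lt hx)
  have hdiff : DifferentiableAt ℂ (fun x => T m ((a^m)⁻¹ • Phi ((a^m) • x))) p := by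
    have h1 : DifferentiableAt ℂ (fun x : ℂ × ℂ => (a^m) • x) p :=
      (differentiable_id.const_smul ((a:ℂ)^m)).differentiableAt
    have h2 : DifferentiableAt ℂ Phi ((a^m) • p) :=
      (Phi_hasFDerivAt (by rwa [Metric.mem_ball, dist_zero_right])).differentiableAt
    have h3 : DifferentiableAt ℂ (fun z : ℂ × ℂ => ((a:ℂ)^m)⁻¹ • z)
        (Phi ((a^m) • p)) :=
      (differentiable_id.const_smul (((a:ℂ)^m)⁻¹)).differentiableAt
    have h4 : DifferentiableAt ℂ (T m) (((a:ℂ)^m)⁻¹ • Phi ((a^m) • p)) :=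
      (hasFDerivAt_T m _).differentiableAt
    exact ((h4.comp _ h3).comp _ h2).comp p h1
  exact hdiff.congr_of_eventuallyEq hev

/-- the invariant horn region -/
def S : Set (ℂ × ℂ) := {q | 8*(1 + ‖q.1‖^2) ≤ ‖q.2‖}

lemma norm_a : ‖a‖ = 1/32 := by
  have := norm_a_pow 1
  simpa [aR] using this

lemma F_S {q : ℂ × ℂ} (h : q ∈ S) : F q ∈ S := by
  simp only [S, Set.mem_setOf_eq] at h ⊢
  have hZ0 : (0:ℝ) ≤ ‖q.1‖ := norm_nonneg _
  have hA0 : (0:ℝ) ≤ ‖q.2‖ := norm_nonneg _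
  set Z := ‖q.1‖ with hZ
  set A := ‖q.2‖ with hA
  have hA8 : 8 ≤ A := by nlinarith [sq_nonneg Z]
  have hZ2 : Z^2 ≤ A/8 := by nlinarith
  have hA3 : 512 ≤ A^3 := by
    have := pow_le_pow_left₀ (show (0:ℝ) ≤ 8 by norm_num) hA8 3
    norm_num at this
    linarith
  have hA4 : 4096 ≤ A^4 := by
    have := pow_le_pow_left₀ (show (0:ℝ) ≤ 8 by norm_num) hA8 4
    norm_num at this
    linarith
  have hZA : Z ≤ A^2/64 := by nlinarith [sq_nonneg (Z - A^2/64), sq_nonneg (Z + A^2/64)]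
  -- norm of the first coordinate of F q
  set Z' := ‖q.1 + q.2*q.2‖ with hZ'
  have hZ'0 : (0:ℝ) ≤ Z' := norm_nonneg _
  have hZ'low : A^2 - Z ≤ Z' := by
    have h1 : ‖q.2*q.2‖ ≤ Z' + Z := by
      calc ‖q.2*q.2‖ = ‖(q.1 + q.2*q.2) - q.1‖ := by ring_nf
        _ ≤ ‖q.1 + q.2*q.2‖ + ‖q.1‖ := norm_sub_le _ _
    rw [norm_mul] at h1
    nlinarith
  have hZ'low2 : (63/64)*A^2 ≤ Z' := by nlinarith
  have hZ'sq : ((63/64)*A^2)^2 ≤ Z'^2 := by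
    apply pow_le_pow_left₀ (by positivity) hZ'low2
  -- component identities
  have hF1 : ‖(F q).1‖ = (1/32) * Z' := by
    show ‖a * (q.1 + q.2*q.2)‖ = _
    rw [norm_mul, norm_a]
  have hF2 : (1/32) * (Z'^2 - A) ≤ ‖(F q).2‖ := by
    show _ ≤ ‖a * (q.2 + (q.1 + q.2*q.2)*(q.1 + q.2*q.2))‖
    rw [norm_mul, norm_a]
    have h1 : ‖(q.1 + q.2*q.2)*(q.1 + q.2*q.2)‖ ≤
        ‖q.2 + (q.1 + q.2*q.2)*(q.1 + q.2*q.2)‖ + A := by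
      calc ‖(q.1 + q.2*q.2)*(q.1 + q.2*q.2)‖
          = ‖(q.2 + (q.1 + q.2*q.2)*(q.1 + q.2*q.2)) - q.2‖ := by ring_nf
        _ ≤ ‖q.2 + (q.1 + q.2*q.2)*(q.1 + q.2*q.2)‖ + ‖q.2‖ := norm_sub_le _ _
    rw [norm_mul] at h1
    have h2 : Z'^2 - A ≤ ‖q.2 + (q.1 + q.2*q.2)*(q.1 + q.2*q.2)‖ := by nlinarith
    nlinarith [norm_nonneg (q.2 + (q.1 + q.2*q.2)*(q.1 + q.2*q.2))]
  rw [hF1]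
  refine le_trans ?_ hF2
  -- final arithmetic
  nlinarith [hZ'sq, hA4, hA3, hA8, hZ'0]

lemma Phi_not_S (p : ℂ × ℂ) : Phi p ∉ S := by
  intro hS
  have pow_mem : ∀ m : ℕ, Phi ((a^m) • p) ∈ S := by
    intro m
    induction m with
    | zero => simpa using hS
    | succ m ih =>
        have e : (a^(m+1)) • p = a • ((a^m) • p) := by
          rw [smul_smul, ← pow_succ']
        rw [e, ← F_Phi]
        exact F_S ih
  have hlim : Tendsto (fun m : ℕ => Phi ((a^m) • p)) atTop (𝓝 0) := by
    rw [← Phi_zero]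
    apply (Phi_diff.continuous.tendsto 0).comp
    rw [tendsto_zero_iff_norm_tendsto_zero]
    simp only [smul_norm_pow]
    have := tendsto_pow_atTop_nhds_zero_of_lt_one aR_pos.le (by norm_num [aR])
    simpa using this.mul_const ‖p‖
  have hlim2 : Tendsto (fun m : ℕ => ‖(Phi ((a^m) • p)).2‖) atTop (𝓝 0) := by
    have h := (continuous_norm.comp continuous_snd).tendsto (0 : ℂ × ℂ)
    have := h.comp hlim
    simpa [Function.comp_def] using this
  have hev := hlim2.eventually (eventually_lt_nhds (show (0:ℝ) < 8 by norm_num))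
  obtain ⟨m, hm⟩ := hev.exists
  have h8 : 8 ≤ ‖(Phi ((a^m) • p)).2‖ := by
    have := pow_mem m
    simp only [S, Set.mem_setOf_eq] at this
    nlinarith [sq_nonneg ‖(Phi ((a^m) • p)).1‖]
  linarith

end FB

/-- Let `V = {(z, w) ∈ ℂ² : |w| < 1 + |z|²}`.  Then there exists an
injective holomorphic map `Φ : ℂ² → ℂ²` whose image is contained in `V`. -/
theorem exists_fatou_bieberbach_into_region :
    ∃ Φ : ℂ × ℂ → ℂ × ℂ,
      Function.Injective Φ ∧ Differentiable ℂ Φ ∧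
      ∀ p : ℂ × ℂ, ‖(Φ p).2‖ < 1 + ‖(Φ p).1‖ ^ 2 := by
  refine ⟨(fun q : ℂ × ℂ => (q.1, (1/8 : ℂ) * q.2)) ∘ FB.Phi, ?_, ?_, ?_⟩
  · apply Function.Injective.comp ?_ FB.Phi_inj
    intro x y hxy
    rw [Prod.ext_iff] at hxy ⊢
    obtain ⟨h1, h2⟩ := hxy
    refine ⟨h1, ?_⟩
    field_simp at h2
    exact h2
  · apply Differentiable.comp ?_ FB.Phi_diff
    exact differentiable_fst.prodMk (differentiable_snd.const_mul _)
  · intro p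
    have h := FB.Phi_not_S p
    simp only [FB.S, Set.mem_setOf_eq, not_le] at h
    simp only [Function.comp_apply]
    have e : ‖(1/8 : ℂ) * (FB.Phi p).2‖ = (1/8) * ‖(FB.Phi p).2‖ := by
      rw [norm_mul]
      norm_num
    show ‖(1/8 : ℂ) * (FB.Phi p).2‖ < 1 + ‖(FB.Phi p).1‖^2
    rw [e]
    nlinarith [norm_nonneg (FB.Phi p).2, norm_nonneg (FB.Phi p).1]
end
end

section
/- Let f and f₁ be entire functions on ℂ with no common zeros and with f₁ not identically zero, so that s = f/f₁ is a meromorphic function on ℂ. Then there exists a holomorphic function φ : ℂ² → ℂ such that the fiber-preserving holomorphic map Φ(z,w) = (z, φ(z,w)) maps ℂ² onto the complement of the graph of s; precisely, for every z ∈ ℂ the set {φ(z,w) : w ∈ ℂ} equals {v ∈ ℂ : f₁(z)·v ≠ f(z)}. -/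
open Complex Set Filter Metric


noncomputable section

private def expE : ℂ → ℂ := dslope Complex.exp 0

private lemma expE_diff : Differentiable ℂ expE := by
  have : DifferentiableOn ℂ expE univ :=
    (differentiableOn_dslope (univ_mem : univ ∈ nhds (0:ℂ))).mpr
      Complex.differentiable_exp.differentiableOn
  exact differentiableOn_univ.mp this

private lemma expE_eq (x : ℂ) : x * expE x = Complex.exp x - 1 := by
  rcases eq_or_ne x 0 with h | h
  · simp [h]
  · rw [expE, dslope_of_ne _ h, slope_def_field]
    field_simp
    simp

private lemma expE_zero : expE 0 = 1 := by
  simp [expE, dslope_same, Complex.deriv_exp]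

private lemma analyticAt_dslope {B : ℂ → ℂ} {p : ℂ} (hB : AnalyticAt ℂ B p) :
    AnalyticAt ℂ (dslope B p) p := by
  obtain ⟨s, hs⟩ := hB
  exact hs.has_fpower_series_dslope_fslope.analyticAt

private lemma jet_split {A : ℂ → ℂ} {p : ℂ} (hA : AnalyticAt ℂ A p) (n : ℕ) :
    ∃ T B : ℂ → ℂ, Differentiable ℂ T ∧ AnalyticAt ℂ B p ∧
      ∀ z : ℂ, A z = T z + (z - p) ^ n * B z := by
  induction n with
  | zero => exact ⟨0, A, differentiable_const 0, hA, fun z => by simp⟩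
  | succ n ih =>
    obtain ⟨T, B, hT, hB, hev⟩ := ih
    refine ⟨fun z => T z + (z - p) ^ n * B p, dslope B p,
      hT.add (((differentiable_id.sub_const p).pow n).mul (differentiable_const _)),
      analyticAt_dslope hB, fun z => ?_⟩
    have hkey : (z - p) * dslope B p z = B z - B p := by
      have := sub_smul_dslope B p z; rwa [smul_eq_mul] at this
    have hBz : B z = B p + (z - p) * dslope B p z := by rw [hkey]; ring
    rw [hev z, hBz]; ring

private lemma eq_at_of_punctured {θ g : ℂ → ℂ} {x : ℂ} (hθ : ContinuousAt θ x)
    (hg : ContinuousAt g x) (h : ∀ᶠ z in nhdsWithin x {x}ᶜ, θ z = g z) : θ x = g x := by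
  have h1 : Tendsto θ (nhdsWithin x {x}ᶜ) (nhds (θ x)) := hθ.continuousWithinAt.tendsto
  have h2 : Tendsto θ (nhdsWithin x {x}ᶜ) (nhds (g x)) :=
    (hg.continuousWithinAt.tendsto).congr' (h.mono fun z hz => hz.symm)
  exact tendsto_nhds_unique h1 h2

private lemma ev_nhds_of_punctured {x : ℂ} {q : ℂ → Prop}
    (h : ∀ᶠ z in nhdsWithin x {x}ᶜ, q z) (hx : q x) : ∀ᶠ z in nhds x, q z := by
  rw [eventually_nhdsWithin_iff] at h
  filter_upwards [h] with z hz
  rcases eq_or_ne z x with rfl | hne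
  · exact hx
  · exact hz hne

private lemma glue_across {S : Set ℂ} (hS : IsClosed S)
    (hiso : ∀ p ∈ S, ∀ᶠ z in nhdsWithin p {p}ᶜ, z ∉ S)
    {F : ℂ → ℂ} (hF : DifferentiableOn ℂ F Sᶜ)
    (loc : ∀ p, p ∈ S → ∃ gp : ℂ → ℂ, AnalyticAt ℂ gp p ∧
      ∀ᶠ z in nhdsWithin p {p}ᶜ, F z = gp z) :
    ∃ θ : ℂ → ℂ, Differentiable ℂ θ ∧ (∀ z ∉ S, θ z = F z) := by
  classical
  refine ⟨fun z => if h : z ∈ S then Classical.choose (loc z h) z else F z, ?_, ?_⟩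
  · intro x
    by_cases hx : x ∈ S
    · have hgp := Classical.choose_spec (loc x hx)
      have heq : (fun z => if h : z ∈ S then Classical.choose (loc z h) z else F z)
          =ᶠ[nhds x] Classical.choose (loc x hx) := by
        apply ev_nhds_of_punctured (x := x)
        · filter_upwards [hiso x hx, hgp.2] with z hz1 hz2
          rw [dif_neg hz1]; exact hz2
        · simp [dif_pos hx]
      exact heq.differentiableAt_iff.mpr hgp.1.differentiableAt
    · have heq : (fun z => if h : z ∈ S then Classical.choose (loc z h) z else F z)
          =ᶠ[nhds x] F := by
        filter_upwards [hS.isOpen_compl.mem_nhds hx] with z hz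
        exact dif_neg hz
      exact heq.differentiableAt_iff.mpr (hF.differentiableAt (hS.isOpen_compl.mem_nhds hx))
  · intro z hz; exact dif_neg hz

/-- Stage A: there is an entire `u` with `f₁ u - f` nonvanishing, assuming `f₁ 0 ≠ 0`. -/
private lemma exists_avoid0 (f f₁ : ℂ → ℂ) (hf : Differentiable ℂ f)
    (hf₁ : Differentiable ℂ f₁) (hcz : ∀ z : ℂ, ¬(f z = 0 ∧ f₁ z = 0))
    (h0 : f₁ 0 ≠ 0) :
    ∃ u : ℂ → ℂ, Differentiable ℂ u ∧ ∀ z : ℂ, f₁ z * u z ≠ f z := by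
  classical
  set D : Set ℂ := {z | f₁ z = 0} with hD
  have hDc : IsClosed D := isClosed_eq hf₁.continuous continuous_const
  -- isolation of zeros
  have hiso : ∀ x : ℂ, ∀ᶠ z in nhdsWithin x {x}ᶜ, f₁ z ≠ 0 := by
    intro x
    rcases (hf₁.analyticAt x).eventually_eq_zero_or_eventually_ne_zero with h | h
    · exfalso
      have hzero : EqOn f₁ 0 univ := by
        apply AnalyticOnNhd.eqOn_zero_of_preconnected_of_eventuallyEq_zero
          (fun y _ => hf₁.analyticAt y) isPreconnected_univ (mem_univ x)
        exact h
      exact h0 (hzero (mem_univ 0))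
    · exact h
  have hisoD : ∀ p ∈ D, ∀ᶠ z in nhdsWithin p {p}ᶜ, z ∉ D :=
    fun p _ => (hiso p).mono fun z hz => hz
  -- finiteness of zeros in balls
  have hfin : ∀ R : ℝ, {z : ℂ | f₁ z = 0 ∧ ‖z‖ ≤ R}.Finite := by
    intro R
    have hset : {z : ℂ | f₁ z = 0 ∧ ‖z‖ ≤ R} = D ∩ closedBall 0 R := by
      ext z; simp [hD, mem_closedBall_zero_iff]
    rw [hset]
    have hK : IsCompact (D ∩ closedBall (0:ℂ) R) :=
      (isCompact_closedBall (0:ℂ) R).inter_left hDc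
    have hdisc : DiscreteTopology ↥(D ∩ closedBall (0:ℂ) R) := by
      rw [discreteTopology_subtype_iff]
      intro x hx
      rw [inf_principal_eq_bot]
      exact mem_of_superset (hiso x) fun z hz hzmem => hz hzmem.1
    exact hK.finite (isDiscrete_iff_discreteTopology.mpr hdisc)
  -- countability of D
  have hcnt : D.Countable := by
    have : D ⊆ ⋃ n : ℕ, {z : ℂ | f₁ z = 0 ∧ ‖z‖ ≤ n} := by
      intro z hz
      obtain ⟨n, hn⟩ := exists_nat_ge ‖z‖
      exact mem_iUnion.mpr ⟨n, hz, hn⟩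
    exact (Set.countable_iUnion fun n : ℕ => (hfin n).countable).mono this
  have : Countable ↥D := hcnt.to_subtype
  obtain ⟨c, hc⟩ := exists_injective_nat ↥D
  -- LOCAL DATA at each zero of f₁
  have localdata : ∀ p : ↥D, ∃ P Q ℓ ρ : ℂ → ℂ,
      DifferentiableOn ℂ P {(p:ℂ)}ᶜ ∧ Differentiable ℂ Q ∧
      (∀ z : ℂ, ‖z‖ < ‖(p:ℂ)‖ / 2 → ‖P z - Q z‖ ≤ (1/2 : ℝ) ^ (c p)) ∧
      AnalyticAt ℂ ℓ (p:ℂ) ∧ (∀ᶠ z in nhds (p:ℂ), Complex.exp (ℓ z) = -f z) ∧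
      AnalyticAt ℂ ρ (p:ℂ) ∧
      (∀ᶠ z in nhdsWithin (p:ℂ) {(p:ℂ)}ᶜ, ℓ z = f₁ z * (P z + ρ z)) := by
    rintro p
    obtain ⟨p₀, hp₀⟩ := p
    simp only [Subtype.coe_mk]
    have hp₀' : f₁ p₀ = 0 := hp₀
    have hfp : f p₀ ≠ 0 := fun h => hcz p₀ ⟨h, hp₀'⟩
    have hp₀0 : p₀ ≠ 0 := fun e => h0 (e ▸ hp₀')
    -- order and factorization
    have ha := hf₁.analyticAt p₀
    have hnetop : analyticOrderAt f₁ p₀ ≠ ⊤ := by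
      intro htop
      have h1 := analyticOrderAt_eq_top.mp htop
      have h2 := hiso p₀
      rcases ((h1.filter_mono nhdsWithin_le_nhds).and h2).exists with ⟨z, hz1, hz2⟩
      exact hz2 hz1
    obtain ⟨g, hg, hg0, hfac⟩ := (ha.analyticOrderAt_eq_natCast (n := (analyticOrderAt f₁ p₀).toNat)).mp
      (ENat.coe_toNat hnetop).symm
    set n := (analyticOrderAt f₁ p₀).toNat
    -- local logarithm of -f
    set ζ := -f p₀ with hζdef
    have hζ : ζ ≠ 0 := neg_ne_zero.mpr hfp
    set hq : ℂ → ℂ := fun z => -f z / ζ with hqdef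
    have hhd : Differentiable ℂ hq := hf.neg.div_const ζ
    have hh1 : hq p₀ = 1 := div_self hζ
    have hlog : AnalyticAt ℂ Complex.log 1 :=
      DifferentiableOn.analyticAt (s := Complex.slitPlane)
        (fun z hz => (Complex.differentiableAt_log hz).differentiableWithinAt)
        (Complex.isOpen_slitPlane.mem_nhds Complex.one_mem_slitPlane)
    set ℓ : ℂ → ℂ := fun z => Complex.log (hq z) + Complex.log ζ with hℓdef
    have hℓa : AnalyticAt ℂ ℓ p₀ := by
      have h1 : AnalyticAt ℂ Complex.log (hq p₀) := hh1 ▸ hlog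
      have h2 : AnalyticAt ℂ (Complex.log ∘ hq) p₀ := h1.comp (hhd.analyticAt p₀)
      exact h2.add analyticAt_const
    have hev0 : ∀ᶠ z in nhds p₀, hq z ≠ 0 :=
      hhd.continuous.continuousAt.eventually_ne (hh1 ▸ one_ne_zero)
    have hℓe : ∀ᶠ z in nhds p₀, Complex.exp (ℓ z) = -f z := by
      filter_upwards [hev0] with z hz
      rw [hℓdef]
      simp only
      rw [Complex.exp_add, Complex.exp_log hz, Complex.exp_log hζ]
      field_simp [hqdef]
      exact div_mul_cancel₀ _ hζ
    -- principal part
    set A : ℂ → ℂ := fun z => ℓ z / g z with hAdef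
    have hA : AnalyticAt ℂ A p₀ := hℓa.div hg hg0
    obtain ⟨T, B, hT, hB, hev⟩ := jet_split hA n
    set P : ℂ → ℂ := fun z => T z / (z - p₀) ^ n with hPdef
    have hP : DifferentiableOn ℂ P {p₀}ᶜ := by
      apply hT.differentiableOn.div
        (((differentiable_id.sub_const p₀).pow n).differentiableOn)
      intro z hz
      exact pow_ne_zero _ (sub_ne_zero.mpr hz)
    have hcong : ∀ᶠ z in nhdsWithin p₀ {p₀}ᶜ, ℓ z = f₁ z * (P z + B z) := by
      filter_upwards [hfac.filter_mono nhdsWithin_le_nhds,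
        (hg.continuousAt.eventually_ne hg0).filter_mono nhdsWithin_le_nhds,
        eventually_mem_nhdsWithin] with z h1 h2 h3
      have h3' : z ≠ p₀ := h3
      have hzp : (z - p₀) ^ n ≠ 0 := pow_ne_zero _ (sub_ne_zero.mpr h3')
      have hl : ℓ z = g z * (T z + (z - p₀) ^ n * B z) := by
        rw [← hev z, hAdef]
        field_simp
      rw [h1, smul_eq_mul, hl, hPdef]
      field_simp
    -- Taylor polynomial approximation
    have hnorm : (0:ℝ) < ‖p₀‖ := norm_pos_iff.mpr hp₀0
    set R : NNReal := (3/4 * ‖p₀‖).toNNReal with hRdef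
    have hRpos : 0 < R := Real.toNNReal_pos.mpr (by positivity)
    have hRcoe : (R : ℝ) = 3/4 * ‖p₀‖ := Real.coe_toNNReal _ (by positivity)
    have hsub : closedBall (0:ℂ) R ⊆ {p₀}ᶜ := by
      intro z hz
      have hz' : ‖z‖ ≤ (R:ℝ) := mem_closedBall_zero_iff.mp hz
      intro he
      rw [he, hRcoe] at hz'
      linarith
    have hfps := (hP.mono hsub).hasFPowerSeriesOnBall hRpos
    set r' : NNReal := (‖p₀‖ / 2).toNNReal with hr'def
    have hr'coe : (r' : ℝ) = ‖p₀‖ / 2 := Real.coe_toNNReal _ (by positivity)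
    have hr'R : (r' : ENNReal) < (R : ENNReal) := by
      rw [ENNReal.coe_lt_coe, ← NNReal.coe_lt_coe, hr'coe, hRcoe]
      linarith
    have htu := hfps.tendstoUniformlyOn' hr'R
    have hpos : (0:ℝ) < (1/2 : ℝ) ^ (c ⟨p₀, hp₀⟩) := by positivity
    obtain ⟨N, hN⟩ := ((Metric.tendstoUniformlyOn_iff.mp htu) _ hpos).exists
    set Q : ℂ → ℂ := fun y => (cauchyPowerSeries P 0 R).partialSum N (y - 0) with hQdef
    have hQd : Differentiable ℂ Q := by
      have hform : Q = fun y : ℂ =>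
          ∑ k ∈ Finset.range N, (y - 0) ^ k • (cauchyPowerSeries P 0 ↑R).coeff k := by
        funext y
        simp [hQdef, FormalMultilinearSeries.partialSum,
          FormalMultilinearSeries.apply_eq_pow_smul_coeff]
      rw [hform]
      apply Differentiable.fun_sum
      intro k _
      simp only [smul_eq_mul]
      exact ((differentiable_id.sub_const 0).pow k).mul_const _
    refine ⟨P, Q, ℓ, B, hP, hQd, ?_, hℓa, hℓe, hB, hcong⟩
    intro z hz
    have hzball : z ∈ ball (0:ℂ) r' := by
      rw [mem_ball_zero_iff, hr'coe]; exact hz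
    have := hN z hzball
    rw [dist_eq_norm] at this
    exact le_of_lt this
  choose P Q ℓ ρ hP hQ hbd hℓa hℓe hρa hcong using localdata
  -- the convergence-generating weights
  set w : ↥D → ℝ := fun p => (1/2 : ℝ) ^ (c p) with hwdef
  have hw : Summable w :=
    (summable_geometric_of_lt_one (by norm_num) (by norm_num)).comp_injective hc
  set τ : ↥D → ℂ → ℂ := fun p z => P p z - Q p z with hτdef
  have hτd : ∀ p : ↥D, DifferentiableOn ℂ (τ p) {(p:ℂ)}ᶜ :=
    fun p => (hP p).sub (hQ p).differentiableOn
  have hτb : ∀ (p : ↥D) (z : ℂ), ‖z‖ < ‖(p:ℂ)‖ / 2 → ‖τ p z‖ ≤ w p := hbd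
  have hfinsub : ∀ R : ℝ, {p : ↥D | ‖(p:ℂ)‖ ≤ R}.Finite := by
    intro R
    have : {p : ↥D | ‖(p:ℂ)‖ ≤ R} = Subtype.val ⁻¹' {z : ℂ | f₁ z = 0 ∧ ‖z‖ ≤ R} := by
      ext p; simp [p.2]; intro _; exact p.2
    rw [this]
    exact (hfin R).preimage Subtype.val_injective.injOn
  have hsummable : ∀ z : ℂ, Summable (fun p : ↥D => τ p z) := by
    intro z
    apply Summable.of_norm_bounded_eventually hw
    rw [Filter.eventually_cofinite]
    apply Set.Finite.subset (hfinsub (2 * ‖z‖ + 1))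
    intro p hp
    simp only [mem_setOf_eq] at hp ⊢
    by_contra hle
    push_neg at hle
    exact hp (hτb p z (by linarith))
  set G : ℂ → ℂ := fun z => ∑' p : ↥D, τ p z with hGdef
  -- tail sums
  set JF : ℝ → Finset ↥D := fun R => (hfinsub (2 * R)).toFinset with hJFdef
  set tail : ℝ → ℂ → ℂ :=
    fun R z => ∑' q : ↥((↑(JF R) : Set ↥D)ᶜ), τ (↑q) z with htaildef
  have hdecomp : ∀ (R : ℝ) (z : ℂ), G z = (∑ p ∈ JF R, τ p z) + tail R z :=
    fun R z => (Summable.sum_add_tsum_compl (hsummable z)).symm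
  have htaildiff : ∀ R : ℝ, 0 < R → DifferentiableOn ℂ (tail R) (ball (0:ℂ) R) := by
    intro R hR
    have hb : ∀ (q : ↥((↑(JF R) : Set ↥D)ᶜ)) (z : ℂ), z ∈ ball (0:ℂ) R →
        ‖τ (↑q) z‖ ≤ w ↑q := by
      intro q z hz
      have hq : ¬ (‖((q : ↥D) : ℂ)‖ ≤ 2 * R) := by
        have hq2 := q.2
        simp only [hJFdef, mem_compl_iff, Finset.mem_coe, Set.Finite.mem_toFinset,
          mem_setOf_eq] at hq2
        exact hq2
      push_neg at hq
      exact hτb _ z (by have := mem_ball_zero_iff.mp hz; linarith)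
    have htu := tendstoUniformlyOn_tsum (hw.subtype ((↑(JF R) : Set ↥D)ᶜ)) hb
    apply htu.tendstoLocallyUniformlyOn.differentiableOn ?_ isOpen_ball
    filter_upwards with t
    apply DifferentiableOn.fun_sum
    intro q _
    apply (hτd _).mono
    intro z hz
    simp only [mem_compl_iff, mem_singleton_iff]
    intro he
    have hq : ¬ (‖((q : ↥D) : ℂ)‖ ≤ 2 * R) := by
      have hq2 : (q : ↥D) ∉ (↑(JF R) : Set ↥D) := q.2
      simp only [hJFdef, mem_compl_iff, Finset.mem_coe, Set.Finite.mem_toFinset,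
        mem_setOf_eq] at hq2
      exact hq2
    push_neg at hq
    have := mem_ball_zero_iff.mp hz
    rw [he] at this
    linarith
  -- differentiability of G off D
  have hGdiff : DifferentiableOn ℂ G Dᶜ := by
    intro x hx
    set R : ℝ := ‖x‖ + 1 with hRdef
    have hxball : x ∈ ball (0:ℂ) R := by
      rw [mem_ball_zero_iff]; simp [hRdef]
    have hVopen : IsOpen (ball (0:ℂ) R ∩ Dᶜ) := isOpen_ball.inter hDc.isOpen_compl
    have hGV : DifferentiableOn ℂ G (ball (0:ℂ) R ∩ Dᶜ) := by
      apply DifferentiableOn.congr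
        (f := fun z => (∑ p ∈ JF R, τ p z) + tail R z)
      · apply DifferentiableOn.add
        · apply DifferentiableOn.fun_sum
          intro p _
          apply (hτd p).mono
          rintro z ⟨_, hz2⟩
          simp only [mem_compl_iff, mem_singleton_iff]
          intro he
          exact hz2 (by rw [he]; exact p.2)
        · exact (htaildiff R (by positivity)).mono inter_subset_left
      · intro z _; exact hdecomp R z
    exact ((hGV.differentiableAt (hVopen.mem_nhds ⟨hxball, hx⟩)).differentiableWithinAt)
  -- local models H q
  set Rq : ↥D → ℝ := fun q => ‖(q:ℂ)‖ + 1 with hRqdef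
  have hRqpos : ∀ q : ↥D, 0 < Rq q := fun q => by
    have := norm_nonneg ((q:ℂ)); simp only [hRqdef]; linarith
  have hqJ : ∀ q : ↥D, q ∈ JF (Rq q) := by
    intro q
    simp only [hJFdef, Set.Finite.mem_toFinset, mem_setOf_eq, hRqdef]
    have := norm_nonneg ((q:ℂ)); linarith
  set H : ↥D → ℂ → ℂ := fun q z =>
    ((∑ p ∈ (JF (Rq q)).erase q, τ p z) - Q q z) + tail (Rq q) z with hHdef
  have hGPH : ∀ (q : ↥D) (z : ℂ), G z = P q z + H q z := by
    intro q z
    rw [hdecomp (Rq q) z, ← Finset.sum_erase_add _ _ (hqJ q)]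
    simp only [hHdef, hτdef]
    ring
  have hHan : ∀ q : ↥D, AnalyticAt ℂ (H q) (q:ℂ) := by
    intro q
    set V : Set ℂ := ball (0:ℂ) (Rq q) ∩
      (⋂ p ∈ (JF (Rq q)).erase q, {((p : ↥D) : ℂ)}ᶜ) with hVdef
    have hVopen : IsOpen V :=
      isOpen_ball.inter (isOpen_biInter_finset fun p _ => isOpen_compl_singleton)
    have hqV : (q:ℂ) ∈ V := by
      constructor
      · rw [mem_ball_zero_iff]; simp only [hRqdef]; linarith
      · rw [mem_iInter₂]
        intro p hp
        simp only [mem_compl_iff, mem_singleton_iff]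
        intro he
        exact (Finset.ne_of_mem_erase hp) (Subtype.val_injective he).symm
    have hHV : DifferentiableOn ℂ (H q) V := by
      apply DifferentiableOn.add
      · apply DifferentiableOn.sub
        · apply DifferentiableOn.fun_sum
          intro p hp
          apply (hτd p).mono
          intro z hz
          have := mem_iInter₂.mp hz.2 p hp
          exact this
        · exact (hQ q).differentiableOn
      · exact (htaildiff _ (hRqpos q)).mono inter_subset_left
    exact hHV.analyticAt (hVopen.mem_nhds hqV)
  -- glue θ
  set rr : ↥D → ℂ → ℂ := fun q z => H q z - ρ q z with hrrdef
  set gp : ↥D → ℂ → ℂ := fun q z => ℓ q z + f₁ z * rr q z with hgpdef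
  have hgpa : ∀ q : ↥D, AnalyticAt ℂ (gp q) (q:ℂ) :=
    fun q => (hℓa q).add ((hf₁.analyticAt _).mul ((hHan q).sub (hρa q)))
  have hFg : ∀ q : ↥D, ∀ᶠ z in nhdsWithin (q:ℂ) {(q:ℂ)}ᶜ, f₁ z * G z = gp q z := by
    intro q
    filter_upwards [hcong q] with z h1
    rw [hGPH q z, hgpdef]
    simp only [hrrdef]
    linear_combination -h1
  have hFd : DifferentiableOn ℂ (fun z => f₁ z * G z) Dᶜ :=
    hf₁.differentiableOn.mul hGdiff
  obtain ⟨θ, hθd, hθeq⟩ := glue_across hDc hisoD hFd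
    (fun p hp => ⟨gp ⟨p, hp⟩, hgpa ⟨p, hp⟩, hFg ⟨p, hp⟩⟩)
  have hθloc : ∀ q : ↥D, ∀ᶠ z in nhds (q:ℂ), θ z = gp q z := by
    intro q
    have hpunct : ∀ᶠ z in nhdsWithin (q:ℂ) {(q:ℂ)}ᶜ, θ z = gp q z := by
      filter_upwards [hiso (q:ℂ), hFg q] with z h1 h2
      rw [hθeq z h1, h2]
    apply ev_nhds_of_punctured hpunct
    exact eq_at_of_punctured (hθd.continuous.continuousAt) (hgpa q).continuousAt hpunct
  -- final division
  set Nf : ℂ → ℂ := fun z => Complex.exp (θ z) + f z with hNdef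
  have hNd : Differentiable ℂ Nf := (hθd.cexp).add hf
  have hFd2 : DifferentiableOn ℂ (fun z => Nf z / f₁ z) Dᶜ :=
    fun x hx => ((hNd x).div (hf₁ x) hx).differentiableWithinAt
  have loc2 : ∀ p, p ∈ D → ∃ gu : ℂ → ℂ, AnalyticAt ℂ gu p ∧
      ∀ᶠ z in nhdsWithin p {p}ᶜ, Nf z / f₁ z = gu z := by
    intro p hp
    set q : ↥D := ⟨p, hp⟩ with hqdef2
    refine ⟨fun z => -(f z * rr q z * expE (f₁ z * rr q z)), ?_, ?_⟩
    · have hra : AnalyticAt ℂ (rr q) (q:ℂ) := (hHan q).sub (hρa q)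
      have hmul : AnalyticAt ℂ (fun z => f₁ z * rr q z) (q:ℂ) :=
        (hf₁.analyticAt _).mul hra
      have hcomp : AnalyticAt ℂ (fun z => expE (f₁ z * rr q z)) (q:ℂ) :=
        (expE_diff.analyticAt _).comp hmul
      exact (((hf.analyticAt _).mul hra).mul hcomp).neg
    · filter_upwards [(hθloc q).filter_mono nhdsWithin_le_nhds,
        (hℓe q).filter_mono nhdsWithin_le_nhds, hiso (q:ℂ)] with z h1 h2 h3
      have hNz : Nf z = f₁ z * -(f z * rr q z * expE (f₁ z * rr q z)) := by
        rw [hNdef]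
        simp only
        rw [h1, hgpdef]
        simp only
        rw [Complex.exp_add, h2]
        have hE := expE_eq (f₁ z * rr q z)
        linear_combination (f z) * hE
      rw [hNz]
      field_simp
  obtain ⟨u, hud, hueq⟩ := glue_across hDc hisoD hFd2 loc2
  refine ⟨u, hud, ?_⟩
  intro z
  by_cases hz : f₁ z = 0
  · rw [hz, zero_mul]
    intro e
    exact hcz z ⟨e.symm, hz⟩
  · have h1 : u z = Nf z / f₁ z := hueq z hz
    rw [h1]
    have h2 : f₁ z * (Nf z / f₁ z) = Nf z := by field_simp
    rw [h2]
    intro he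
    have : Complex.exp (θ z) = 0 := by
      have := he
      simp only [hNdef] at this
      linear_combination this
    exact Complex.exp_ne_zero (θ z) this


end

private lemma exists_avoid (f f₁ : ℂ → ℂ) (hf : Differentiable ℂ f)
    (hf₁ : Differentiable ℂ f₁) (hcz : ∀ z : ℂ, ¬(f z = 0 ∧ f₁ z = 0))
    (hne : ∃ z : ℂ, f₁ z ≠ 0) :
    ∃ u : ℂ → ℂ, Differentiable ℂ u ∧ ∀ z : ℂ, f₁ z * u z ≠ f z := by
  obtain ⟨a, ha⟩ := hne
  obtain ⟨u', hu'd, hu'⟩ := exists_avoid0 (fun z => f (z + a)) (fun z => f₁ (z + a))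
    (hf.comp (differentiable_id.add_const a)) (hf₁.comp (differentiable_id.add_const a))
    (fun z h => hcz (z + a) h) (by simpa using ha)
  refine ⟨fun z => u' (z - a), hu'd.comp (differentiable_id.sub_const a), fun z => ?_⟩
  have := hu' (z - a)
  simpa using this

/-- Let `f` and `f₁` be entire functions with no common zeros and
with `f₁` not identically zero, so that `s = f / f₁` is a meromorphic function on `ℂ`.
Then there exists a holomorphic function `φ : ℂ² → ℂ` such that the fiber-preserving
holomorphic map `Φ(z, w) = (z, φ(z, w))` maps `ℂ²` onto the complement of the graph of
`s`: for every `z ∈ ℂ` the set `{φ(z, w) : w ∈ ℂ}` equals `{v : f₁(z)·v ≠ f(z)}`. -/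
theorem exists_dominating_map_onto_complement_of_graph
    (f f₁ : ℂ → ℂ) (hf : Differentiable ℂ f) (hf₁ : Differentiable ℂ f₁)
    (hcz : ∀ z : ℂ, ¬(f z = 0 ∧ f₁ z = 0))
    (hne : ∃ z : ℂ, f₁ z ≠ 0) :
    ∃ φ : ℂ × ℂ → ℂ,
      Differentiable ℂ φ ∧
      ∀ z : ℂ, (Set.range fun w : ℂ => φ (z, w)) = {v : ℂ | f₁ z * v ≠ f z} := by
  obtain ⟨u, hud, hu⟩ := exists_avoid f f₁ hf hf₁ hcz hne
  refine ⟨fun q => u q.1 * Complex.exp (f₁ q.1 * q.2)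
      - f q.1 * (q.2 * expE (f₁ q.1 * q.2)), ?_, ?_⟩
  · have hx : Differentiable ℂ (fun q : ℂ × ℂ => f₁ q.1 * q.2) :=
      (hf₁.comp differentiable_fst).mul differentiable_snd
    exact ((hud.comp differentiable_fst).mul hx.cexp).sub
      ((hf.comp differentiable_fst).mul (differentiable_snd.mul (expE_diff.comp hx)))
  · intro z
    ext v
    simp only [Set.mem_range, Set.mem_setOf_eq]
    constructor
    · rintro ⟨w, rfl⟩
      intro he
      have hkey : f₁ z * (w * expE (f₁ z * w)) = Complex.exp (f₁ z * w) - 1 := by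
        linear_combination expE_eq (f₁ z * w)
      have hzero : (f₁ z * u z - f z) * Complex.exp (f₁ z * w) = 0 := by
        linear_combination he + (f z) * hkey
      rcases mul_eq_zero.mp hzero with h | h
      · exact hu z (by linear_combination h)
      · exact Complex.exp_ne_zero _ h
    · intro hv
      by_cases ha : f₁ z = 0
      · have hb : f z ≠ 0 := by
          rw [ha, zero_mul] at hv
          exact fun e => hv e.symm
        refine ⟨(u z - v) / f z, ?_⟩
        simp only [ha, zero_mul, Complex.exp_zero, expE_zero, mul_one]
        field_simp
        ring
      · have hden : f₁ z * u z - f z ≠ 0 := sub_ne_zero.mpr (hu z)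
        have hnum : f₁ z * v - f z ≠ 0 := sub_ne_zero.mpr hv
        set t := Complex.log ((f₁ z * v - f z) / (f₁ z * u z - f z)) with htdef
        refine ⟨t / f₁ z, ?_⟩
        have hx : f₁ z * (t / f₁ z) = t := by field_simp
        rw [hx]
        have hexp : Complex.exp t = (f₁ z * v - f z) / (f₁ z * u z - f z) :=
          Complex.exp_log (div_ne_zero hnum hden)
        have hkey : f₁ z * ((t / f₁ z) * expE t) = Complex.exp t - 1 := by
          have h1 := expE_eq t
          field_simp
          linear_combination h1
        have hmain : (f₁ z * u z - f z) * Complex.exp t = f₁ z * v - f z := by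
          rw [hexp]
          field_simp
        apply mul_left_cancel₀ ha
        linear_combination hmain - (f z) * hkey
end

section
/- There exists an entire function ψ : ℂ² → ℂ satisfying ψ(t,w) = (exp(tw) − 1)/t for all t ≠ 0 and ψ(0,w) = w for all w ∈ ℂ; moreover, for every t ∈ ℂ the range of the map w ↦ ψ(t,w) is exactly {v ∈ ℂ : 1 + t·v ≠ 0}. In particular, for t ≠ 0 the map w ↦ ψ(t,w) maps ℂ onto ℂ \ {−1/t}, and the fiber-preserving map (t,w) ↦ (t, ψ(t,w)) maps ℂ² onto the complement of the graph of the meromorphic function t ↦ −1/t. -/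
noncomputable def E : ℂ → ℂ := dslope Complex.exp 0

lemma E_diff : Differentiable ℂ E := by
  intro z
  rcases eq_or_ne z 0 with rfl | hz
  · obtain ⟨p, hp⟩ := analyticAt_cexp (z := (0 : ℂ))
    exact hp.has_fpower_series_dslope_fslope.analyticAt.differentiableAt
  · exact (differentiableAt_dslope_of_ne hz).mpr (Complex.differentiable_exp _)

lemma E_zero : E 0 = 1 := by
  simp [E, dslope_same, Complex.deriv_exp]

lemma E_ne (z : ℂ) (hz : z ≠ 0) : E z = (Complex.exp z - 1) / z := by
  simp [E, dslope_of_ne _ hz, slope, Complex.exp_zero, vsub_eq_sub, sub_zero, div_eq_inv_mul]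

/-- There exists an entire function `ψ : ℂ² → ℂ` satisfying
`ψ(t, w) = (exp(tw) − 1)/t` for `t ≠ 0` and `ψ(0, w) = w`; moreover, for every `t ∈ ℂ`
the range of `w ↦ ψ(t, w)` is exactly `{v : 1 + t·v ≠ 0}`.  In particular, for `t ≠ 0`
the map `w ↦ ψ(t, w)` maps `ℂ` onto `ℂ \ {−1/t}`, and `(t, w) ↦ (t, ψ(t, w))` maps
`ℂ²` onto the complement of the graph of the meromorphic function `t ↦ −1/t`. -/
theorem exists_entire_exp_difference_quotient :
    ∃ ψ : ℂ × ℂ → ℂ,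
      Differentiable ℂ ψ ∧
      (∀ t w : ℂ, t ≠ 0 → ψ (t, w) = (Complex.exp (t * w) - 1) / t) ∧
      (∀ w : ℂ, ψ (0, w) = w) ∧
      ∀ t : ℂ, (Set.range fun w : ℂ => ψ (t, w)) = {v : ℂ | 1 + t * v ≠ 0} := by
  refine ⟨fun p => p.2 * E (p.1 * p.2), ?_, ?_, ?_, ?_⟩
  · exact differentiable_snd.mul (E_diff.comp (differentiable_fst.mul differentiable_snd))
  · intro t w ht
    show w * E (t * w) = _
    rcases eq_or_ne w 0 with rfl | hw
    · simp [ht]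
    · rw [E_ne _ (mul_ne_zero ht hw)]
      field_simp
  · intro w; simp [E_zero]
  · intro t
    ext v
    rcases eq_or_ne t 0 with rfl | ht
    · simp [E_zero]
    · constructor
      · rintro ⟨w, rfl⟩
        show 1 + t * (w * E (t * w)) ≠ 0
        rcases eq_or_ne w 0 with rfl | hw
        · simp
        · rw [E_ne _ (mul_ne_zero ht hw)]
          have : 1 + t * (w * ((Complex.exp (t * w) - 1) / (t * w)))
              = Complex.exp (t * w) := by field_simp; ring
          rw [this]
          exact Complex.exp_ne_zero _
      · intro hv
        refine ⟨Complex.log (1 + t * v) / t, ?_⟩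
        show Complex.log (1 + t * v) / t * E (t * (Complex.log (1 + t * v) / t)) = v
        have hexp : Complex.exp (Complex.log (1 + t * v)) = 1 + t * v :=
          Complex.exp_log hv
        have hne : t * (Complex.log (1 + t * v) / t) = Complex.log (1 + t * v) := by
          field_simp
        rcases eq_or_ne (Complex.log (1 + t * v)) 0 with h0 | h0
        · have h1 : (1 : ℂ) + t * v = 1 := by rw [← hexp, h0, Complex.exp_zero]
          have hv0 : v = 0 := by
            have : t * v = 0 := by linear_combination h1
            rcases mul_eq_zero.mp this with h | h
            · exact absurd h ht
            · exact h
          simp [h0, hv0]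
        · rw [hne, E_ne _ h0, hexp]
          field_simp
          ring
end
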